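/- arXiv:2006.09095 — 6 statements merged into one kernel-verified Lean document; each statement's English description precedes it below -/
import Mathlib

section
/- Let 𝓕 be a family of holomorphic functions on a domain D ⊆ ℂ. If the Julia like set J(𝓕) has an isolated point, then there exists a nonempty open set U ⊆ F(𝓕) such that ℂ \ ⋃_{f ∈ 𝓕} f(U) contains at most one point. -/
open Filter Topology Set

/-- Locally uniform divergence to `∞` on the set `s`: on every compact subset of `s`,
the moduli eventually exceed every bound, uniformly. -/
def TendstoLocallyUniformlyOnInfty (F : ℕ → ℂ → ℂ) (s : Set ℂ) : Prop :=
  ∀ K ⊆ s, IsCompact K → ∀ M : ℝ, ∀ᶠ n in Filter.atTop, ∀ z ∈ K, M ≤ ‖F n z‖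

/-- The family `𝓕` of functions holomorphic on `D` is normal at `z₀ ∈ D`: there is a
neighborhood `N ⊆ D` of `z₀` on which every sequence from `𝓕` has a subsequence converging
locally uniformly either to a holomorphic function or to `∞`. -/
def NormalAt (D : Set ℂ) (𝓕 : Set (ℂ → ℂ)) (z₀ : ℂ) : Prop :=
  ∃ N, N ⊆ D ∧ N ∈ 𝓝 z₀ ∧ ∀ f : ℕ → ℂ → ℂ, (∀ n, f n ∈ 𝓕) →
    ∃ φ : ℕ → ℕ, StrictMono φ ∧
      ((∃ g : ℂ → ℂ, DifferentiableOn ℂ g N ∧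
          TendstoLocallyUniformlyOn (fun n => f (φ n)) g Filter.atTop N) ∨
        TendstoLocallyUniformlyOnInfty (fun n => f (φ n)) N)

/-- The Fatou like set of `𝓕` on `D`: points of `D` where `𝓕` is normal. -/
def FatouSet (D : Set ℂ) (𝓕 : Set (ℂ → ℂ)) : Set ℂ := {z | z ∈ D ∧ NormalAt D 𝓕 z}

/-- The Julia like set of `𝓕` on `D`. -/
def JuliaSet (D : Set ℂ) (𝓕 : Set (ℂ → ℂ)) : Set ℂ := D \ FatouSet D 𝓕

/-- The backward orbit of `z` with respect to `𝓕`. -/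
def BackwardOrbit (D : Set ℂ) (𝓕 : Set (ℂ → ℂ)) (z : ℂ) : Set ℂ :=
  {w | w ∈ D ∧ ∃ f ∈ 𝓕, f w = z}

/-- The exceptional set of `𝓕`: points with finite backward orbit. -/
def ExceptionalSet (D : Set ℂ) (𝓕 : Set (ℂ → ℂ)) : Set ℂ :=
  {z | (BackwardOrbit D 𝓕 z).Finite}

/-- The escaping like set `I(𝓕)`: points `z ∈ D` such that `f n z → ∞` for every
infinite (i.e. injective) sequence `f` in `𝓕`. -/
def EscapingSet (D : Set ℂ) (𝓕 : Set (ℂ → ℂ)) : Set ℂ :=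
  {z | z ∈ D ∧ ∀ f : ℕ → ℂ → ℂ, (∀ n, f n ∈ 𝓕) → Function.Injective f →
    Filter.Tendsto (fun n => ‖f n z‖) Filter.atTop Filter.atTop}

/-- The generalized escaping like set `U(𝓕)`: points `z ∈ D` such that `f n z → ∞` for some
sequence `f` in `𝓕`. -/
def GenEscapingSet (D : Set ℂ) (𝓕 : Set (ℂ → ℂ)) : Set ℂ :=
  {z | z ∈ D ∧ ∃ f : ℕ → ℂ → ℂ, (∀ n, f n ∈ 𝓕) ∧
    Filter.Tendsto (fun n => ‖f n z‖) Filter.atTop Filter.atTop}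

/-- A transcendental entire function: entire and not a polynomial. -/
def TranscendentalEntire (f : ℂ → ℂ) : Prop :=
  Differentiable ℂ f ∧ ¬ ∃ p : Polynomial ℂ, ∀ z, f z = p.eval z

/-- Boundary of `A` relative to `D`; for `D` open and `A ⊆ D` this coincides with the
boundary of `A` in the subspace topology of `D`. -/
def relBoundary (D A : Set ℂ) : Set ℂ := D ∩ frontier A

/-- Closure of `A` in `D`; for `D` open and `A ⊆ D` this coincides with the closure of `A`
in the subspace topology of `D`. -/
def relClosure (D A : Set ℂ) : Set ℂ := D ∩ closure A

def GoodOn (N : Set ℂ) (F : ℕ → ℂ → ℂ) : Prop :=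
  (∃ g : ℂ → ℂ, DifferentiableOn ℂ g N ∧
      TendstoLocallyUniformlyOn F g Filter.atTop N) ∨
    TendstoLocallyUniformlyOnInfty F N

lemma tlu_subseq {F : ℕ → ℂ → ℂ} {g : ℂ → ℂ} {s : Set ℂ} {φ : ℕ → ℕ}
    (h : TendstoLocallyUniformlyOn F g Filter.atTop s) (hφ : StrictMono φ) :
    TendstoLocallyUniformlyOn (fun n => F (φ n)) g Filter.atTop s := by
  intro u hu x hx
  obtain ⟨t, ht, h2⟩ := h u hu x hx
  exact ⟨t, ht, hφ.tendsto_atTop.eventually h2⟩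

lemma infty_subseq {F : ℕ → ℂ → ℂ} {s : Set ℂ} {φ : ℕ → ℕ}
    (h : TendstoLocallyUniformlyOnInfty F s) (hφ : StrictMono φ) :
    TendstoLocallyUniformlyOnInfty (fun n => F (φ n)) s :=
  fun K hK hKc M => hφ.tendsto_atTop.eventually (h K hK hKc M)

lemma goodOn_subseq {N : Set ℂ} {F : ℕ → ℂ → ℂ} {φ : ℕ → ℕ}
    (h : GoodOn N F) (hφ : StrictMono φ) : GoodOn N (fun n => F (φ n)) := by
  rcases h with ⟨g, hg, htlu⟩ | hinf
  · exact Or.inl ⟨g, hg, tlu_subseq htlu hφ⟩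
  · exact Or.inr (infty_subseq hinf hφ)

lemma diagonal {𝓕 : Set (ℂ → ℂ)} (Ns : ℂ → Set ℂ) (l : List ℂ)
    (h : ∀ w ∈ l, ∀ f : ℕ → ℂ → ℂ, (∀ n, f n ∈ 𝓕) →
      ∃ φ : ℕ → ℕ, StrictMono φ ∧ GoodOn (Ns w) (fun n => f (φ n)))
    (f : ℕ → ℂ → ℂ) (hf : ∀ n, f n ∈ 𝓕) :
    ∃ φ : ℕ → ℕ, StrictMono φ ∧ ∀ w ∈ l, GoodOn (Ns w) (fun n => f (φ n)) := by
  induction l generalizing f with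
  | nil => exact ⟨id, strictMono_id, by simp⟩
  | cons a t ih =>
    obtain ⟨φ₁, hφ₁, hgood⟩ := ih (fun w hw => h w (List.mem_cons_of_mem _ hw)) f hf
    obtain ⟨φ₂, hφ₂, hga⟩ := h a List.mem_cons_self (fun n => f (φ₁ n)) (fun n => hf _)
    refine ⟨φ₁ ∘ φ₂, hφ₁.comp hφ₂, ?_⟩
    intro w hw
    rcases List.mem_cons.mp hw with rfl | hw
    · exact hga
    · exact goodOn_subseq (F := fun n => f (φ₁ n)) (hgood w hw) hφ₂

lemma maxmod {f : ℂ → ℂ} {z₀ : ℂ} {ρ r : ℝ} (hρ : 0 < ρ) (hρr : ρ < r)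
    (hd : DifferentiableOn ℂ f (Metric.ball z₀ r)) {Cb : ℝ}
    (hb : ∀ z ∈ Metric.sphere z₀ ρ, ‖f z‖ ≤ Cb) :
    ∀ z ∈ Metric.closedBall z₀ ρ, ‖f z‖ ≤ Cb := by
  intro z hz
  have hsub : Metric.closedBall z₀ ρ ⊆ Metric.ball z₀ r := Metric.closedBall_subset_ball hρr
  refine Complex.norm_le_of_forall_mem_frontier_norm_le (U := Metric.ball z₀ ρ)
    Metric.isBounded_ball ⟨hd.mono (fun x hx => hsub (Metric.ball_subset_closedBall hx)),
      hd.continuousOn.mono ?_⟩ ?_ ?_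
  · rw [closure_ball z₀ hρ.ne']; exact hsub
  · rw [frontier_ball z₀ hρ.ne']; exact hb
  · rw [closure_ball z₀ hρ.ne']; exact hz


/-- If the Julia like set of a family `𝓕` of holomorphic functions on a
domain `D` has an isolated point, then there is a nonempty open set `U ⊆ F(𝓕)` such that
`ℂ \ ⋃_{f ∈ 𝓕} f(U)` has at most one point. -/
theorem exists_open_almost_onto_of_isolated_julia_point
    (D : Set ℂ) (hD : IsOpen D) (hDconn : IsConnected D)
    (𝓕 : Set (ℂ → ℂ)) (hol : ∀ f ∈ 𝓕, DifferentiableOn ℂ f D)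
    (z₀ : ℂ) (hz₀ : z₀ ∈ JuliaSet D 𝓕)
    (hiso : ∃ N ∈ 𝓝 z₀, N ∩ JuliaSet D 𝓕 = {z₀}) :
    ∃ U : Set ℂ, U.Nonempty ∧ IsOpen U ∧ U ⊆ FatouSet D 𝓕 ∧
      (Set.univ \ ⋃ f ∈ 𝓕, f '' U).Subsingleton := by
  classical
  obtain ⟨hz₀D, hz₀F⟩ := hz₀
  have hnn : ¬ NormalAt D 𝓕 z₀ := fun h => hz₀F ⟨hz₀D, h⟩
  obtain ⟨N₀, hN₀, hN₀iso⟩ := hiso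
  obtain ⟨r, hr, hball⟩ : ∃ r > 0, Metric.closedBall z₀ r ⊆ N₀ ∩ D := by
    have h1 : N₀ ∩ D ∈ 𝓝 z₀ := Filter.inter_mem hN₀ (hD.mem_nhds hz₀D)
    rcases Metric.nhds_basis_closedBall.mem_iff.mp h1 with ⟨r, hr, h⟩
    exact ⟨r, hr, h⟩
  have hballD : Metric.ball z₀ r ⊆ D :=
    fun z hz => (hball (Metric.ball_subset_closedBall hz)).2
  have hballN₀ : Metric.ball z₀ r ⊆ N₀ :=
    fun z hz => (hball (Metric.ball_subset_closedBall hz)).1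
  set U : Set ℂ := Metric.ball z₀ r \ {z₀} with hUdef
  have hUopen : IsOpen U := Metric.isOpen_ball.sdiff isClosed_singleton
  have hUD : U ⊆ D := fun z hz => hballD hz.1
  have hUF : U ⊆ FatouSet D 𝓕 := by
    intro z hz
    by_contra hzF
    have h2 : z ∈ N₀ ∩ JuliaSet D 𝓕 := ⟨hballN₀ hz.1, ⟨hUD hz, hzF⟩⟩
    rw [hN₀iso] at h2
    exact hz.2 h2
  have hUne : U.Nonempty := by
    refine ⟨z₀ + ((r/2 : ℝ) : ℂ), ?_, ?_⟩
    · rw [Metric.mem_ball, dist_eq_norm, add_sub_cancel_left, Complex.norm_real,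
        Real.norm_eq_abs, abs_of_pos (by linarith)]
      linarith
    · simp only [Set.mem_singleton_iff, add_eq_left]
      intro h
      have : (r / 2 : ℝ) = 0 := by exact_mod_cast h
      linarith
  refine ⟨U, hUne, hUopen, hUF, ?_⟩
  by_contra hsub
  rw [Set.not_subsingleton_iff] at hsub
  obtain ⟨a, ha, b, hb, hab⟩ := hsub
  have ha' : ∀ f ∈ 𝓕, ∀ z ∈ U, f z ≠ a := by
    intro f hf z hz he
    exact ha.2 (Set.mem_biUnion hf ⟨z, hz, he⟩)
  have hb' : ∀ f ∈ 𝓕, ∀ z ∈ U, f z ≠ b := by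
    intro f hf z hz he
    exact hb.2 (Set.mem_biUnion hf ⟨z, hz, he⟩)
  have homit : ∀ f ∈ 𝓕,
      (∀ z ∈ Metric.ball z₀ r, f z ≠ a) ∨ (∀ z ∈ Metric.ball z₀ r, f z ≠ b) := by
    intro f hf
    by_cases hfa : f z₀ = a
    · right
      intro z hz he
      rcases eq_or_ne z z₀ with rfl | hzz
      · rw [he] at hfa; exact hab hfa.symm
      · exact hb' f hf z ⟨hz, hzz⟩ he
    · left
      intro z hz he
      rcases eq_or_ne z z₀ with rfl | hzz
      · exact hfa he
      · exact ha' f hf z ⟨hz, hzz⟩ he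
  -- the circle
  set ρ := r / 2 with hρdef
  have hρ : 0 < ρ := by positivity
  have hρr : ρ < r := by rw [hρdef]; linarith
  set C := Metric.sphere z₀ ρ with hCdef
  have hCU : C ⊆ U := by
    intro z hz
    have hd : dist z z₀ = ρ := hz
    refine ⟨Metric.mem_ball.mpr (by rw [hd]; exact hρr), ?_⟩
    intro h
    rw [Set.mem_singleton_iff] at h
    subst h
    rw [dist_self] at hd
    exact hρ.ne hd
  have hρD : Metric.ball z₀ ρ ⊆ D :=
    fun z hz => hballD (Metric.ball_subset_ball hρr.le hz)
  have hCF : ∀ w, w ∈ C → NormalAt D 𝓕 w := fun w hw => (hUF (hCU hw)).2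
  unfold NormalAt at hCF
  choose! Ns hNsD hNsnb hNsgood using hCF
  have hε : ∀ w, w ∈ C → ∃ ε, 0 < ε ∧ Metric.closedBall w ε ⊆ interior (Ns w) := by
    intro w hw
    have h1 : interior (Ns w) ∈ 𝓝 w := interior_mem_nhds.mpr (hNsnb w hw)
    rcases Metric.nhds_basis_closedBall.mem_iff.mp h1 with ⟨ε, hε1, hε2⟩
    exact ⟨ε, hε1, hε2⟩
  choose! ε hεpos hεsub using hε
  have hCcomp : IsCompact C := isCompact_sphere z₀ ρ
  obtain ⟨t, htC, htfin, htcov⟩ := hCcomp.elim_finite_subcover_image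
    (fun w (_ : w ∈ C) => Metric.isOpen_ball (x := w) (ε := ε w))
    (fun z hz => Set.mem_biUnion hz (Metric.mem_ball_self (hεpos z hz)))
  set l := htfin.toFinset.toList with hldef
  have hmeml : ∀ w, w ∈ t ↔ w ∈ l := by
    intro w
    rw [hldef, Finset.mem_toList, Set.Finite.mem_toFinset]
  -- derive normality at z₀, contradiction
  refine absurd ?_ hnn
  refine ⟨Metric.ball z₀ ρ, hρD, Metric.ball_mem_nhds z₀ hρ, ?_⟩
  intro f hf
  -- pigeonhole: a subsequence omitting a fixed value c on the ball
  have hfreq : ∃ c, (∃ᶠ n in atTop, ∀ z ∈ Metric.ball z₀ r, f n z ≠ c) := by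
    by_contra hcon
    push_neg at hcon
    have h1 := hcon a
    have h2 := hcon b
    have h1 : ∀ᶠ n in atTop, ¬ ∀ z ∈ Metric.ball z₀ r, f n z ≠ a := h1.mono fun n ⟨z, hz, he⟩ h => h z hz he
    have h2 : ∀ᶠ n in atTop, ¬ ∀ z ∈ Metric.ball z₀ r, f n z ≠ b := h2.mono fun n ⟨z, hz, he⟩ h => h z hz he
    obtain ⟨n, hn1, hn2⟩ := (h1.and h2).exists
    rcases homit (f n) (hf n) with h | h
    · exact hn1 h
    · exact hn2 h
  obtain ⟨c, hfreqc⟩ := hfreq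
  obtain ⟨ψ₀, hψ₀, hψ₀c⟩ := extraction_of_frequently_atTop hfreqc
  have hgood' : ∀ w ∈ l, ∀ g : ℕ → ℂ → ℂ, (∀ n, g n ∈ 𝓕) →
      ∃ φ : ℕ → ℕ, StrictMono φ ∧ GoodOn (Ns w) (fun n => g (φ n)) := by
    intro w hw g hg
    have hwC : w ∈ C := htC ((hmeml w).mpr hw)
    exact hNsgood w hwC g hg
  obtain ⟨ψ₁, hψ₁, hGood⟩ := diagonal Ns l hgood' (fun n => f (ψ₀ n)) (fun n => hf _)
  set F : ℕ → ℂ → ℂ := fun n => f (ψ₀ (ψ₁ n)) with hFdef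
  have hGoodF : ∀ w ∈ l, GoodOn (Ns w) F := hGood
  refine ⟨ψ₀ ∘ ψ₁, hψ₀.comp hψ₁, ?_⟩
  have hFdiff : ∀ n, DifferentiableOn ℂ (F n) D := fun n => hol _ (hf _)
  have hFc : ∀ n, ∀ z ∈ Metric.ball z₀ r, F n z ≠ c := fun n => hψ₀c (ψ₁ n)
  -- dichotomy via connectedness of the circle
  set Winf : Set ℂ := ⋃ w ∈ {w ∈ t | TendstoLocallyUniformlyOnInfty F (Ns w)},
    interior (Ns w) with hWinfdef
  set Wh : Set ℂ := ⋃ w ∈ {w ∈ t | ¬ TendstoLocallyUniformlyOnInfty F (Ns w)},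
    interior (Ns w) with hWhdef
  have hWinfopen : IsOpen Winf := isOpen_biUnion fun _ _ => isOpen_interior
  have hWhopen : IsOpen Wh := isOpen_biUnion fun _ _ => isOpen_interior
  have hdisj : ∀ z, z ∈ C → z ∈ Winf → z ∈ Wh → False := by
    intro z _ hz1 hz2
    obtain ⟨w₁, hw₁, hzw₁⟩ := Set.mem_iUnion₂.mp hz1
    obtain ⟨w₂, hw₂, hzw₂⟩ := Set.mem_iUnion₂.mp hz2
    rcases hGoodF w₂ ((hmeml w₂).mp hw₂.1) with ⟨g, _, htlu⟩ | hinf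
    · have hInfty : Tendsto (fun n => ‖F n z‖) atTop atTop := by
        rw [Filter.tendsto_atTop]
        intro M
        have := hw₁.2 {z} (Set.singleton_subset_iff.mpr (interior_subset hzw₁))
          isCompact_singleton M
        exact this.mono fun n h => h z rfl
      have hfin : Tendsto (fun n => F n z) atTop (𝓝 (g z)) :=
        htlu.tendsto_at (interior_subset hzw₂)
      exact not_tendsto_atTop_of_tendsto_nhds hfin.norm hInfty
    · exact hw₂.2 hinf
  have hcov2 : C ⊆ Winf ∪ Wh := by
    intro z hz
    obtain ⟨w, hwmem, hzw⟩ := Set.mem_iUnion₂.mp (htcov hz)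
    have hwC : w ∈ C := htC hwmem
    have hz' : z ∈ interior (Ns w) := hεsub w hwC (Metric.ball_subset_closedBall hzw)
    by_cases hP : TendstoLocallyUniformlyOnInfty F (Ns w)
    · exact Or.inl (Set.mem_biUnion ⟨hwmem, hP⟩ hz')
    · exact Or.inr (Set.mem_biUnion ⟨hwmem, hP⟩ hz')
  have hCpre : IsPreconnected C :=
    isPreconnected_sphere (by rw [Complex.rank_real_complex]; exact_mod_cast (by norm_num : (1:ℕ) < 2)) z₀ ρ
  have hnotboth : ¬((C ∩ Winf).Nonempty ∧ (C ∩ Wh).Nonempty) := by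
    rintro ⟨h1, h2⟩
    obtain ⟨z, hzC, hzW⟩ := hCpre Winf Wh hWinfopen hWhopen hcov2 h1 h2
    exact hdisj z hzC hzW.1 hzW.2
  by_cases hcase : (C ∩ Winf).Nonempty
  · -- all of C is of ∞ type
    have hWhE : ¬(C ∩ Wh).Nonempty := fun h => hnotboth ⟨hcase, h⟩
    set s'' := htfin.toFinset.filter (fun w => TendstoLocallyUniformlyOnInfty F (Ns w)) with hs''
    have hcovinf : ∀ z ∈ C, ∃ w ∈ s'', z ∈ C ∩ Metric.closedBall w (ε w) := by
      intro z hz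
      obtain ⟨w, hwmem, hzw⟩ := Set.mem_iUnion₂.mp (htcov hz)
      have hwC : w ∈ C := htC hwmem
      have hz' : z ∈ interior (Ns w) := hεsub w hwC (Metric.ball_subset_closedBall hzw)
      by_cases hP : TendstoLocallyUniformlyOnInfty F (Ns w)
      · exact ⟨w, Finset.mem_filter.mpr ⟨htfin.mem_toFinset.mpr hwmem, hP⟩,
          hz, Metric.ball_subset_closedBall hzw⟩
      · exact absurd ⟨z, hz, Set.mem_biUnion ⟨hwmem, hP⟩ hz'⟩ hWhE
    refine Or.inr ?_
    intro K hK hKcomp M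
    set M' := max M 0 + 2 * ‖c‖ + 1 with hM'
    have hev : ∀ᶠ n in atTop, ∀ z ∈ C, M' ≤ ‖F n z‖ := by
      have hall : ∀ w ∈ s'', ∀ᶠ n in atTop,
          ∀ z ∈ C ∩ Metric.closedBall w (ε w), M' ≤ ‖F n z‖ := by
        intro w hw
        obtain ⟨hwt, hP⟩ := Finset.mem_filter.mp hw
        have hwC : w ∈ C := htC (htfin.mem_toFinset.mp hwt)
        have hKsub : C ∩ Metric.closedBall w (ε w) ⊆ Ns w :=
          fun z hz => interior_subset (hεsub w hwC hz.2)
        have hKc2 : IsCompact (C ∩ Metric.closedBall w (ε w)) :=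
          hCcomp.inter_right Metric.isClosed_closedBall
        exact hP _ hKsub hKc2 M'
      have hcomb := (Filter.eventually_all_finset s'').mpr hall
      refine hcomb.mono fun n hn z hz => ?_
      obtain ⟨w, hw, hzw⟩ := hcovinf z hz
      exact hn w hw z hzw
    refine hev.mono fun n hn z hzK => ?_
    have hzB : z ∈ Metric.closedBall z₀ ρ := Metric.ball_subset_closedBall (hK hzK)
    have hne : ∀ x ∈ Metric.ball z₀ r, F n x - c ≠ 0 :=
      fun x hx => sub_ne_zero.mpr (hFc n x hx)
    have hdiffh : DifferentiableOn ℂ (fun x => (F n x - c)⁻¹) (Metric.ball z₀ r) :=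
      (((hFdiff n).mono hballD).sub (differentiableOn_const c)).inv hne
    have hbound : ∀ x ∈ Metric.sphere z₀ ρ, ‖(F n x - c)⁻¹‖ ≤ (max M 0 + ‖c‖ + 1)⁻¹ := by
      intro x hx
      have h1 : M' ≤ ‖F n x‖ := hn x hx
      have h2 : max M 0 + ‖c‖ + 1 ≤ ‖F n x - c‖ := by
        have h3 : ‖F n x‖ - ‖c‖ ≤ ‖F n x - c‖ := norm_sub_norm_le _ _
        rw [hM'] at h1
        linarith
      rw [norm_inv]
      exact inv_anti₀ (by positivity) h2
    have hmax := maxmod hρ hρr hdiffh hbound z hzB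
    have hzball : z ∈ Metric.ball z₀ r := Metric.ball_subset_ball hρr.le (hK hzK)
    have hzne : F n z - c ≠ 0 := hne z hzball
    have hnormpos : (0:ℝ) < ‖F n z - c‖ := norm_pos_iff.mpr hzne
    rw [norm_inv] at hmax
    have h4 : max M 0 + ‖c‖ + 1 ≤ ‖F n z - c‖ := by
      have hpos : (0:ℝ) < max M 0 + ‖c‖ + 1 := by positivity
      rwa [inv_le_inv₀ hnormpos hpos] at hmax
    have h5 : ‖F n z - c‖ ≤ ‖F n z‖ + ‖c‖ := norm_sub_le _ _
    have h6 : M ≤ max M 0 := le_max_left M 0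
    show M ≤ ‖F n z‖
    linarith
  · -- all of C is of holomorphic type
    set s' := htfin.toFinset.filter (fun w => ¬ TendstoLocallyUniformlyOnInfty F (Ns w)) with hs'
    have hcovh : ∀ z ∈ C, ∃ w ∈ s', z ∈ C ∩ Metric.closedBall w (ε w) := by
      intro z hz
      obtain ⟨w, hwmem, hzw⟩ := Set.mem_iUnion₂.mp (htcov hz)
      have hwC : w ∈ C := htC hwmem
      have hz' : z ∈ interior (Ns w) := hεsub w hwC (Metric.ball_subset_closedBall hzw)
      by_cases hP : TendstoLocallyUniformlyOnInfty F (Ns w)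
      · exact absurd ⟨z, hz, Set.mem_biUnion ⟨hwmem, hP⟩ hz'⟩ hcase
      · exact ⟨w, Finset.mem_filter.mpr ⟨htfin.mem_toFinset.mpr hwmem, hP⟩,
          hz, Metric.ball_subset_closedBall hzw⟩
    have hUC : UniformCauchySeqOn F atTop C := by
      intro u hu
      have hall : ∀ w ∈ s', ∀ᶠ p in atTop ×ˢ atTop,
          ∀ z ∈ C ∩ Metric.closedBall w (ε w), (F p.1 z, F p.2 z) ∈ u := by
        intro w hw
        obtain ⟨hwt, hP⟩ := Finset.mem_filter.mp hw
        have hwC : w ∈ C := htC (htfin.mem_toFinset.mp hwt)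
        rcases hGoodF w ((hmeml w).mp (htfin.mem_toFinset.mp hwt)) with ⟨g, _, htlu⟩ | hinf
        · have htlu' : TendstoLocallyUniformlyOn F g atTop (interior (Ns w)) :=
            htlu.mono interior_subset
          have hKsub : C ∩ Metric.closedBall w (ε w) ⊆ interior (Ns w) :=
            fun z hz => hεsub w hwC hz.2
          have hKc2 : IsCompact (C ∩ Metric.closedBall w (ε w)) :=
            hCcomp.inter_right Metric.isClosed_closedBall
          have hTU : TendstoUniformlyOn F g atTop (C ∩ Metric.closedBall w (ε w)) :=
            (tendstoLocallyUniformlyOn_iff_forall_isCompact isOpen_interior).mp htlu'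
              _ hKsub hKc2
          exact hTU.uniformCauchySeqOn u hu
        · exact absurd hinf hP
      have hcomb := (Filter.eventually_all_finset s').mpr hall
      refine hcomb.mono fun p hp z hz => ?_
      obtain ⟨w, hw, hzw⟩ := hcovh z hz
      exact hp w hw z hzw
    have hUC2 : UniformCauchySeqOn F atTop (Metric.closedBall z₀ ρ) := by
      rw [Metric.uniformCauchySeqOn_iff] at hUC ⊢
      intro εe hεe
      obtain ⟨Nn, hNn⟩ := hUC (εe/2) (by positivity)
      refine ⟨Nn, fun m hm n hn z hz => ?_⟩
      have hfd : ∀ x ∈ Metric.sphere z₀ ρ, ‖F m x - F n x‖ ≤ εe/2 := by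
        intro x hx
        have := hNn m hm n hn x hx
        rw [dist_eq_norm] at this
        exact this.le
      have hdm : DifferentiableOn ℂ (fun x => F m x - F n x) (Metric.ball z₀ r) :=
        ((hFdiff m).mono hballD).sub ((hFdiff n).mono hballD)
      have := maxmod hρ hρr hdm hfd z hz
      rw [dist_eq_norm]
      calc ‖F m z - F n z‖ ≤ εe/2 := this
        _ < εe := by linarith
    have hptw : ∀ z : ℂ, ∃ gl : ℂ,
        z ∈ Metric.closedBall z₀ ρ → Tendsto (fun n => F n z) atTop (𝓝 gl) := by
      intro z
      by_cases hz : z ∈ Metric.closedBall z₀ ρ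
      · have hcs : CauchySeq fun n => F n z := by
          rw [Metric.cauchySeq_iff]
          intro εe hεe
          rw [Metric.uniformCauchySeqOn_iff] at hUC2
          obtain ⟨Nn, hNn⟩ := hUC2 εe hεe
          exact ⟨Nn, fun m hm n hn => hNn m hm n hn z hz⟩
        obtain ⟨gl, hgl⟩ := cauchySeq_tendsto_of_complete hcs
        exact ⟨gl, fun _ => hgl⟩
      · exact ⟨0, fun h => absurd h hz⟩
    choose g hg using hptw
    have hTU : TendstoUniformlyOn F g atTop (Metric.closedBall z₀ ρ) :=
      hUC2.tendstoUniformlyOn_of_tendsto (fun z hz => hg z hz)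
    have hTLU : TendstoLocallyUniformlyOn F g atTop (Metric.ball z₀ ρ) :=
      hTU.tendstoLocallyUniformlyOn.mono Metric.ball_subset_closedBall
    exact Or.inl ⟨g, hTLU.differentiableOn
      (Filter.Eventually.of_forall fun n => (hFdiff n).mono hρD) Metric.isOpen_ball, hTLU⟩
end

section
/- Let D ⊆ ℂ be a simply connected domain, let D₁ be an open connected subset of D, and let U be a connected component of D \ cl(D₁), where cl(D₁) denotes the closure of D₁ in D. Then ∂U, the boundary of U relative to D, is connected. -/
open Filter Topology Set

private lemma half_not_intCast (k m : ℤ) : (k : ℝ) ≠ (m : ℝ) - 1/2 := by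
  intro h
  have h2 : ((2*k : ℤ) : ℝ) = ((2*m - 1 : ℤ) : ℝ) := by push_cast; linarith
  have := Int.cast_injective h2
  omega

private lemma eqOn_of_exp_eq_one {X : Type*} [TopologicalSpace X] {s : Set X}
    (hs : IsPreconnected s) {h : X → ℂ} (hc : ContinuousOn h s)
    (h1 : ∀ z ∈ s, Complex.exp (h z) = 1) {a b : X} (ha : a ∈ s) (hb : b ∈ s) :
    h a = h b := by
  have h2pI : (2 * (Real.pi : ℂ) * Complex.I) ≠ 0 := by
    simp [Real.pi_ne_zero, Complex.I_ne_zero]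
  set r : X → ℝ := fun z => (h z / (2 * (Real.pi : ℂ) * Complex.I)).re with hr
  have hrk : ∀ z ∈ s, ∃ k : ℤ, r z = k ∧ h z = k * (2 * (Real.pi : ℂ) * Complex.I) := by
    intro z hz
    obtain ⟨k, hk⟩ := Complex.exp_eq_one_iff.mp (h1 z hz)
    refine ⟨k, ?_, by exact_mod_cast hk⟩
    rw [hr]
    simp only
    rw [hk]
    rw [mul_div_assoc]
    norm_num [div_self h2pI]
  have hrc : ContinuousOn r s := Complex.continuous_re.comp_continuousOn (hc.div_const _)
  obtain ⟨ka, hka, hka'⟩ := hrk a ha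
  obtain ⟨kb, hkb, hkb'⟩ := hrk b hb
  suffices hk : ka = kb by rw [hka', hkb', hk]
  have main : ∀ (u v : X), u ∈ s → v ∈ s → ∀ ku kv : ℤ, r u = ku → r v = kv →
      ku < kv → False := by
    intro u v hu hv ku kv hru hrv hlt
    have hle : (ku : ℝ) ≤ (kv : ℝ) - 1 := by
      have h1' : ku + 1 ≤ kv := hlt
      have h2' : ((ku + 1 : ℤ) : ℝ) ≤ ((kv : ℤ) : ℝ) := Int.cast_le.mpr h1'
      push_cast at h2'
      linarith
    have hmem : (kv : ℝ) - 1/2 ∈ Icc (r u) (r v) := by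
      constructor
      · rw [hru]; linarith
      · rw [hrv]; linarith
    obtain ⟨z, hz, hzv⟩ := hs.intermediate_value hu hv hrc hmem
    obtain ⟨kz, hkz, _⟩ := hrk z hz
    exact half_not_intCast kz kv (by rw [← hkz, hzv])
  rcases lt_trichotomy ka kb with h' | h' | h'
  · exact absurd (main a b ha hb ka kb hka hkb h') not_false
  · exact h'
  · exact absurd (main b a hb ha kb ka hkb hka h') not_false

private lemma div_mem_slitPlane_of_norm_lt {a b : ℂ} (hb : b ≠ 0) (h : ‖a - b‖ < ‖b‖) :
    a / b ∈ Complex.slitPlane := by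
  have hnorm : ‖a / b - 1‖ < 1 := by
    have heq : a / b - 1 = (a - b) / b := by field_simp
    rw [heq, norm_div, div_lt_one (norm_pos_iff.mpr hb)]
    exact h
  have hre : |(a / b - 1).re| ≤ ‖a / b - 1‖ := Complex.abs_re_le_norm _
  have hre2 : (a / b - 1).re = (a / b).re - 1 := by simp
  refine Complex.mem_slitPlane_iff.mpr (Or.inl ?_)
  have := abs_le.mp hre
  linarith [this.1]

private lemma exp_path_lift (γ : unitInterval → ℂ) (hγ : Continuous γ) (h0 : ∀ t, γ t ≠ 0)
    (z₀ : ℂ) (hz : Complex.exp z₀ = γ 0) :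
    ∃ g : unitInterval → ℂ, Continuous g ∧ g 0 = z₀ ∧ ∀ t, Complex.exp (g t) = γ t := by
  obtain ⟨t₀, -, ht₀⟩ := isCompact_univ.exists_isMinOn univ_nonempty
    (continuous_norm.comp hγ).continuousOn
  set m : ℝ := ‖γ t₀‖ with hm
  have hmpos : 0 < m := norm_pos_iff.mpr (h0 t₀)
  have hmle : ∀ t, m ≤ ‖γ t‖ := fun t => ht₀ (mem_univ t)
  have huc := CompactSpace.uniformContinuous_of_continuous hγ
  rw [Metric.uniformContinuous_iff] at huc
  obtain ⟨δ, hδ, hδ'⟩ := huc m hmpos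
  obtain ⟨n, hn⟩ := exists_nat_one_div_lt hδ
  set N : ℕ := n + 1 with hN
  have hNpos : (0:ℝ) < N := by positivity
  have hNδ : 1 / (N:ℝ) < δ := by exact_mod_cast hn
  have hbmem : ∀ (j : ℕ) (t : unitInterval), min (t:ℝ) ((j:ℝ)/N) ∈ Icc (0:ℝ) 1 :=
    fun j t => ⟨le_min t.2.1 (by positivity), (min_le_left _ _).trans t.2.2⟩
  set b : ℕ → unitInterval → unitInterval :=
    fun j t => ⟨min (t:ℝ) ((j:ℝ)/N), hbmem j t⟩ with hbdef
  have hb_cont : ∀ j, Continuous fun t => b j t := fun j =>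
    Continuous.subtype_mk (continuous_subtype_val.min continuous_const) _
  have hsucc : ∀ j : ℕ, ((j+1 : ℕ) : ℝ) = (j:ℝ) + 1 := by intro j; push_cast; ring
  have hb_dist : ∀ (j : ℕ) (t : unitInterval), ‖γ (b (j+1) t) - γ (b j t)‖ < m := by
    intro j t
    have hdist : dist (b (j+1) t) (b j t) < δ := by
      rw [Subtype.dist_eq, Real.dist_eq]
      have hstep : ((j:ℝ))/N ≤ ((j+1:ℕ):ℝ)/N := by gcongr; exact_mod_cast Nat.le_succ j
      have hmono : min (t:ℝ) ((j:ℝ)/N) ≤ min (t:ℝ) (((j+1:ℕ):ℝ)/N) :=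
        min_le_min le_rfl hstep
      have hupper : min (t:ℝ) (((j+1:ℕ):ℝ)/N) ≤ min (t:ℝ) ((j:ℝ)/N) + 1/N := by
        rcases le_total (t:ℝ) ((j:ℝ)/N) with h | h
        · rw [min_eq_left h, min_eq_left (h.trans hstep)]
          linarith [one_div_pos.mpr hNpos]
        · rw [min_eq_right h]
          calc min (t:ℝ) (((j+1:ℕ):ℝ)/N) ≤ ((j+1:ℕ):ℝ)/N := min_le_right _ _
            _ = (j:ℝ)/N + 1/N := by rw [hsucc, add_div]
      have habs : |min (t:ℝ) (((j+1:ℕ):ℝ)/N) - min (t:ℝ) ((j:ℝ)/N)| ≤ 1/(N:ℝ) := by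
        rw [abs_of_nonneg (by linarith)]
        linarith
      exact lt_of_le_of_lt habs hNδ
    have := hδ' hdist
    rwa [dist_eq_norm] at this
  have hb_slit : ∀ (j : ℕ) (t : unitInterval),
      γ (b (j+1) t) / γ (b j t) ∈ Complex.slitPlane := by
    intro j t
    exact div_mem_slitPlane_of_norm_lt (h0 _) ((hb_dist j t).trans_le (hmle _))
  set g : unitInterval → ℂ :=
    fun t => z₀ + ∑ j ∈ Finset.range N, Complex.log (γ (b (j+1) t) / γ (b j t)) with hgdef
  have hratio_cont : ∀ j : ℕ, Continuous fun t => γ (b (j+1) t) / γ (b j t) := fun j =>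
    (hγ.comp (hb_cont (j+1))).div (hγ.comp (hb_cont j)) (fun t => h0 _)
  refine ⟨g, ?_, ?_, ?_⟩
  · refine continuous_const.add (continuous_finset_sum _ (fun j _ => ?_))
    rw [continuous_iff_continuousAt]
    intro t
    have hcomp := ContinuousAt.comp (x := t) (continuousAt_clog (hb_slit j t))
      ((hratio_cont j).continuousAt)
    exact hcomp
  · have hb0 : ∀ j : ℕ, b j 0 = 0 := by
      intro j
      apply Subtype.ext
      show min ((0:unitInterval):ℝ) ((j:ℝ)/N) = ((0:unitInterval):ℝ)
      exact min_eq_left (by rw [Set.Icc.coe_zero]; positivity)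
    rw [hgdef]
    simp only [hb0, div_self (h0 0), Complex.log_one, Finset.sum_const_zero, add_zero]
  · intro t
    rw [hgdef]
    simp only
    rw [Complex.exp_add, Complex.exp_sum]
    have hterm : ∀ j ∈ Finset.range N,
        Complex.exp (Complex.log (γ (b (j+1) t) / γ (b j t))) = γ (b (j+1) t) / γ (b j t) :=
      fun j _ => Complex.exp_log (div_ne_zero (h0 _) (h0 _))
    rw [Finset.prod_congr rfl hterm]
    have htel : ∀ k : ℕ, ∏ j ∈ Finset.range k, (γ (b (j+1) t) / γ (b j t))
        = γ (b k t) / γ (b 0 t) := by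
      intro k
      induction k with
      | zero => simp [div_self (h0 _)]
      | succ k ih =>
        rw [Finset.prod_range_succ, ih]
        field_simp [h0 (b k t), h0 (b 0 t), h0 (b (k+1) t)]
    rw [htel N]
    have hbN : b N t = t := by
      apply Subtype.ext
      show min (t:ℝ) ((N:ℝ)/N) = (t:ℝ)
      rw [div_self (ne_of_gt hNpos), min_eq_left t.2.2]
    have hb0 : b 0 t = 0 := by
      apply Subtype.ext
      show min (t:ℝ) (((0:ℕ):ℝ)/N) = ((0:unitInterval):ℝ)
      rw [Set.Icc.coe_zero]
      norm_num
      exact t.2.1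
    rw [hbN, hb0, hz]
    rw [mul_div_assoc']
    rw [mul_comm, mul_div_assoc, div_self (h0 0), mul_one]

private lemma exp_lift_unique {γ g₁ g₂ : unitInterval → ℂ} (h₁ : Continuous g₁)
    (h₂ : Continuous g₂) (e₁ : ∀ t, Complex.exp (g₁ t) = γ t) (e₂ : ∀ t, Complex.exp (g₂ t) = γ t)
    (h0 : ∀ t, γ t ≠ 0) (h00 : g₁ 0 = g₂ 0) (t : unitInterval) : g₁ t = g₂ t := by
  have key := eqOn_of_exp_eq_one isPreconnected_univ ((h₁.sub h₂).continuousOn)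
    (fun z _ => by rw [Pi.sub_apply, Complex.exp_sub, e₁, e₂, div_self (h0 z)])
    (mem_univ t) (mem_univ (0 : unitInterval))
  have h2 : g₁ t - g₂ t = 0 := by simp only [Pi.sub_apply] at key; rw [key, h00, sub_self]
  exact sub_eq_zero.mp h2

private lemma exp_lift_end_eq {X : Type*} [TopologicalSpace X] {f : X → ℂ} (hf : Continuous f)
    (h0 : ∀ x, f x ≠ 0) {x y : X} (p q : Path x y) (hpq : p.Homotopic q)
    (z₀ : ℂ) (gp gq : unitInterval → ℂ) (hgpc : Continuous gp) (hgqc : Continuous gq)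
    (hgp0 : gp 0 = z₀) (hgq0 : gq 0 = z₀)
    (hgpe : ∀ t, Complex.exp (gp t) = f (p t)) (hgqe : ∀ t, Complex.exp (gq t) = f (q t)) :
    gp 1 = gq 1 := by
  obtain ⟨H⟩ := hpq
  set F : unitInterval → unitInterval → ℂ := fun s t => f (H (s, t)) with hF
  have hFc : Continuous fun z : unitInterval × unitInterval => f (H z) := hf.comp H.continuous
  have hF0 : ∀ s t, F s t ≠ 0 := fun s t => h0 _
  have hxs : ∀ s, F s 0 = f x := by
    intro s
    have := H.eq_fst s (show (0:unitInterval) ∈ ({0,1} : Set unitInterval) by simp)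
    rw [hF]; simp only [this]; exact congrArg f p.source
  have hys : ∀ s, F s 1 = f y := by
    intro s
    have := H.eq_fst s (show (1:unitInterval) ∈ ({0,1} : Set unitInterval) by simp)
    rw [hF]; simp only [this]; exact congrArg f p.target
  have hz₀ : Complex.exp z₀ = f x := by rw [← hgp0] at *; rw [hgpe 0, p.source]
  have hl : ∀ s, ∃ g : unitInterval → ℂ, Continuous g ∧ g 0 = z₀ ∧
      ∀ t, Complex.exp (g t) = F s t := by
    intro s
    exact exp_path_lift (F s) (hFc.comp (Continuous.prodMk_right s)) (hF0 s) z₀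
      (by rw [hxs s, hz₀])
  set G : unitInterval → unitInterval → ℂ := fun s => (hl s).choose with hG
  have hGc : ∀ s, Continuous (G s) := fun s => (hl s).choose_spec.1
  have hG0 : ∀ s, G s 0 = z₀ := fun s => (hl s).choose_spec.2.1
  have hGe : ∀ s t, Complex.exp (G s t) = F s t := fun s => (hl s).choose_spec.2.2
  set e : unitInterval → ℂ := fun s => G s 1 with he
  -- uniform bound
  obtain ⟨w₀, -, hw₀⟩ := isCompact_univ.exists_isMinOn univ_nonempty
    (continuous_norm.comp hFc).continuousOn
  set m : ℝ := ‖f (H w₀)‖ with hm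
  have hmpos : 0 < m := norm_pos_iff.mpr (h0 _)
  have hmle : ∀ s t, m ≤ ‖F s t‖ := fun s t => hw₀ (mem_univ (s, t))
  have huc := CompactSpace.uniformContinuous_of_continuous hFc
  rw [Metric.uniformContinuous_iff] at huc
  obtain ⟨δ, hδ, hδ'⟩ := huc m hmpos
  -- local constancy
  have hloc : ∀ s₀ s : unitInterval, dist s s₀ < δ → e s = e s₀ := by
    intro s₀ s hss
    have hclose : ∀ t, ‖F s t - F s₀ t‖ < m := by
      intro t
      have hd : dist ((s, t) : unitInterval × unitInterval) (s₀, t) < δ := by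
        rw [Prod.dist_eq]
        simp only [dist_self]
        rw [sup_eq_left.mpr dist_nonneg]
        exact hss
      have := hδ' hd
      rwa [dist_eq_norm] at this
    have hslit : ∀ t, F s t / F s₀ t ∈ Complex.slitPlane := fun t =>
      div_mem_slitPlane_of_norm_lt (hF0 s₀ t) ((hclose t).trans_le (hmle s₀ t))
    set c : unitInterval → ℂ := fun t => G s t - G s₀ t - Complex.log (F s t / F s₀ t) with hc
    have hratioc : Continuous fun t => F s t / F s₀ t :=
      ((hFc.comp (Continuous.prodMk_right s)).div (hFc.comp (Continuous.prodMk_right s₀)) (hF0 s₀))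
    have hcc : Continuous c := by
      refine ((hGc s).sub (hGc s₀)).sub ?_
      rw [continuous_iff_continuousAt]
      intro t
      have hcomp := ContinuousAt.comp (x := t) (continuousAt_clog (hslit t))
        hratioc.continuousAt
      exact hcomp
    have hcexp : ∀ t, Complex.exp (c t) = 1 := by
      intro t
      rw [hc]
      simp only
      rw [Complex.exp_sub, Complex.exp_sub, hGe, hGe,
        Complex.exp_log (div_ne_zero (hF0 s t) (hF0 s₀ t)),
        div_self (div_ne_zero (hF0 s t) (hF0 s₀ t))]
    have hkey := eqOn_of_exp_eq_one isPreconnected_univ hcc.continuousOn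
      (fun z _ => hcexp z) (mem_univ (1 : unitInterval)) (mem_univ (0 : unitInterval))
    have hc0 : c 0 = 0 := by
      rw [hc]
      simp only
      rw [hG0, hG0, sub_self, hxs, hxs, div_self (by rw [← hxs s]; exact hF0 s 0),
        Complex.log_one, sub_zero]
    have hc1 : c 1 = e s - e s₀ := by
      rw [hc]
      simp only
      rw [hys, hys, div_self (by rw [← hys s]; exact hF0 s 1), Complex.log_one, sub_zero]
    rw [hc0] at hkey
    rw [hc1] at hkey
    exact sub_eq_zero.mp hkey
  -- constancy on the interval
  have hconst : e 1 = e 0 := by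
    set S : Set unitInterval := {s | e s = e 0} with hS
    have hSopen : IsOpen S := by
      rw [Metric.isOpen_iff]
      intro s hs
      exact ⟨δ, hδ, fun s' hs' => by
        rw [mem_setOf_eq, hloc s s' (by rwa [Metric.mem_ball] at hs'), hs]⟩
    have hScopen : IsOpen Sᶜ := by
      rw [Metric.isOpen_iff]
      intro s hs
      exact ⟨δ, hδ, fun s' hs' => by
        intro hmem
        exact hs (by rw [mem_setOf_eq, ← hloc s s' (by rwa [Metric.mem_ball] at hs')]; exact hmem)⟩
    have hclopen : IsClopen S := ⟨by rw [← isOpen_compl_iff]; exact hScopen, hSopen⟩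
    have huniv : S = univ := hclopen.eq_univ ⟨0, rfl⟩
    have hmem : (1:unitInterval) ∈ S := huniv ▸ mem_univ _
    exact hmem
  -- identify with given lifts
  have hgp1 : gp 1 = e 0 := by
    refine exp_lift_unique hgpc (hGc 0) (fun t => ?_) (fun t => hGe 0 t) (hF0 0) ?_ 1
    · rw [hgpe t, hF]
      simp only
      rw [H.apply_zero]
      rfl
    · rw [hgp0, hG0]
  have hgq1 : gq 1 = e 1 := by
    refine exp_lift_unique hgqc (hGc 1) (fun t => ?_) (fun t => hGe 1 t) (hF0 1) ?_ 1
    · rw [hgqe t, hF]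
      simp only
      rw [H.apply_one]
      rfl
    · rw [hgq0, hG0]
  rw [hgp1, hgq1, hconst]

-- PART 4
private lemma exp_global_lift {Y : Type*} [TopologicalSpace Y] [SimplyConnectedSpace Y]
    [LocallyPathConnectedSpace Y] {f : Y → ℂ} (hf : Continuous f) (h0 : ∀ x, f x ≠ 0) :
    ∃ g : Y → ℂ, Continuous g ∧ ∀ x, Complex.exp (g x) = f x := by
  obtain ⟨x₀⟩ := (inferInstance : Nonempty Y)
  set z₀ : ℂ := Complex.log (f x₀) with hz₀def
  have hz₀ : Complex.exp z₀ = f x₀ := Complex.exp_log (h0 x₀)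
  have hl : ∀ x : Y, ∃ g : unitInterval → ℂ, Continuous g ∧ g 0 = z₀ ∧
      ∀ t, Complex.exp (g t) = f (PathConnectedSpace.somePath x₀ x t) := by
    intro x
    refine exp_path_lift _ (hf.comp (PathConnectedSpace.somePath x₀ x).continuous)
      (fun t => h0 _) z₀ ?_
    show Complex.exp z₀ = f ((PathConnectedSpace.somePath x₀ x) 0)
    rw [(PathConnectedSpace.somePath x₀ x).source, hz₀]
  set g : Y → ℂ := fun x => (hl x).choose 1 with hgdef
  have hge : ∀ x, Complex.exp (g x) = f x := by
    intro x
    rw [hgdef]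
    simp only
    rw [(hl x).choose_spec.2.2 1, (PathConnectedSpace.somePath x₀ x).target]
  have key : ∀ (x : Y) (P : Path x₀ x) (L : unitInterval → ℂ), Continuous L → L 0 = z₀ →
      (∀ t, Complex.exp (L t) = f (P t)) → L 1 = g x := by
    intro x P L hLc hL0 hLe
    exact exp_lift_end_eq hf h0 P (PathConnectedSpace.somePath x₀ x)
      (SimplyConnectedSpace.paths_homotopic P _) z₀ L _ hLc (hl x).choose_spec.1 hL0
      (hl x).choose_spec.2.1 hLe (hl x).choose_spec.2.2
  refine ⟨g, ?_, hge⟩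
  rw [continuous_iff_continuousAt]
  intro x
  have hball : f ⁻¹' Metric.ball (f x) ‖f x‖ ∈ nhds x :=
    hf.continuousAt.preimage_mem_nhds (Metric.ball_mem_nhds _ (norm_pos_iff.mpr (h0 x)))
  obtain ⟨N, ⟨hN𝓝, hNpc⟩, hNsub⟩ := (path_connected_basis x).mem_iff.mp hball
  have hxN : x ∈ N := mem_of_mem_nhds hN𝓝
  have hnormN : ∀ y ∈ N, ‖f y - f x‖ < ‖f x‖ := by
    intro y hy
    have hmem := hNsub hy
    rw [mem_preimage, Metric.mem_ball, dist_eq_norm] at hmem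
    exact hmem
  have hc0 : ((0:unitInterval):ℝ) = 0 := rfl
  have hc1 : ((1:unitInterval):ℝ) = 1 := rfl
  have hmem0 : (0:ℝ) ∈ Icc (0:ℝ) 1 := by norm_num
  have hmem1 : (1:ℝ) ∈ Icc (0:ℝ) 1 := by norm_num
  have hproj0 : Set.projIcc (0:ℝ) 1 zero_le_one 0 = 0 := by
    rw [Set.projIcc_of_mem zero_le_one hmem0]; rfl
  have hproj1 : Set.projIcc (0:ℝ) 1 zero_le_one 1 = 1 := by
    rw [Set.projIcc_of_mem zero_le_one hmem1]; rfl
  have hclaim : ∀ y ∈ N, g y = g x + Complex.log (f y / f x) := by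
    intro y hy
    have hjoin : JoinedIn N x y := hNpc.joinedIn x hxN y hy
    set q : Path x y := hjoin.somePath with hq
    have hqmem : ∀ t, q t ∈ N := hjoin.somePath_mem
    set ℓ : unitInterval → ℂ := (hl x).choose with hℓ
    have hℓc : Continuous ℓ := (hl x).choose_spec.1
    have hℓ0 : ℓ 0 = z₀ := (hl x).choose_spec.2.1
    have hℓe : ∀ t, Complex.exp (ℓ t) = f (PathConnectedSpace.somePath x₀ x t) :=
      (hl x).choose_spec.2.2
    set L : unitInterval → ℂ := fun t =>
      if 2 * (t:ℝ) ≤ 1 then ℓ (Set.projIcc 0 1 zero_le_one (2*(t:ℝ)))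
      else g x + Complex.log (f (q (Set.projIcc 0 1 zero_le_one (2*(t:ℝ)-1))) / f x) with hL
    have hA : Continuous fun t : unitInterval => ℓ (Set.projIcc 0 1 zero_le_one (2*(t:ℝ))) :=
      hℓc.comp (continuous_projIcc.comp (continuous_const.mul continuous_subtype_val))
    have hB : Continuous fun t : unitInterval =>
        g x + Complex.log (f (q (Set.projIcc 0 1 zero_le_one (2*(t:ℝ)-1))) / f x) := by
      refine continuous_const.add ?_
      rw [continuous_iff_continuousAt]
      intro t
      have hval : f (q (Set.projIcc 0 1 zero_le_one (2*(t:ℝ)-1))) / f x ∈ Complex.slitPlane :=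
        div_mem_slitPlane_of_norm_lt (h0 x) (hnormN _ (hqmem _))
      have hiancont : Continuous fun t : unitInterval =>
          f (q (Set.projIcc 0 1 zero_le_one (2*(t:ℝ)-1))) / f x :=
        ((hf.comp (q.continuous.comp (continuous_projIcc.comp ((continuous_const.mul continuous_subtype_val).sub continuous_const)))).div_const _)
      exact ContinuousAt.comp (x := t) (continuousAt_clog hval) hiancont.continuousAt
    have hLc : Continuous L := by
      rw [hL]
      refine Continuous.if_le hA hB (continuous_const.mul continuous_subtype_val) continuous_const ?_
      intro t ht
      have h1 : Set.projIcc (0:ℝ) 1 zero_le_one (2*(t:ℝ)) = 1 := by rw [ht, hproj1]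
      have h2 : Set.projIcc (0:ℝ) 1 zero_le_one (2*(t:ℝ)-1) = 0 := by
        have hsub : 2*(t:ℝ) - 1 = 0 := by rw [ht]; norm_num
        rw [hsub, hproj0]
      rw [h1, h2, q.source, div_self (h0 x), Complex.log_one, add_zero]
    have hL0 : L 0 = z₀ := by
      rw [hL]
      show (if 2 * ((0:unitInterval):ℝ) ≤ 1 then _ else _) = z₀
      rw [if_pos (by rw [hc0]; norm_num)]
      have h20 : 2*((0:unitInterval):ℝ) = 0 := by rw [hc0]; norm_num
      rw [h20, hproj0, hℓ0]
    have hLe : ∀ t, Complex.exp (L t) =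
        f (((PathConnectedSpace.somePath x₀ x).trans q) t) := by
      intro t
      rw [Path.trans_apply, hL]
      by_cases h : (t:ℝ) ≤ 1/2
      · rw [dif_pos h]
        show Complex.exp (if 2 * (t:ℝ) ≤ 1 then _ else _) = _
        rw [if_pos (by linarith)]
        have hmem : 2*(t:ℝ) ∈ Icc (0:ℝ) 1 := ⟨by have := t.2.1; linarith, by linarith⟩
        rw [Set.projIcc_of_mem zero_le_one hmem]
        exact hℓe _
      · rw [dif_neg h]
        push_neg at h
        show Complex.exp (if 2 * (t:ℝ) ≤ 1 then _ else _) = _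
        rw [if_neg (by push_neg; linarith)]
        have hmem : 2*(t:ℝ)-1 ∈ Icc (0:ℝ) 1 := ⟨by linarith, by linarith [t.2.2]⟩
        rw [Set.projIcc_of_mem zero_le_one hmem]
        rw [Complex.exp_add, hge x, Complex.exp_log (div_ne_zero (h0 _) (h0 x))]
        rw [mul_comm, div_mul_cancel₀ _ (h0 x)]
    have hkey := key y ((PathConnectedSpace.somePath x₀ x).trans q) L hLc hL0 hLe
    rw [← hkey, hL]
    show (if 2 * ((1:unitInterval):ℝ) ≤ 1 then _ else _) = _
    rw [if_neg (by rw [hc1]; norm_num)]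
    have h21 : 2*((1:unitInterval):ℝ) - 1 = 1 := by rw [hc1]; norm_num
    rw [h21, hproj1, q.target]
  have hev : g =ᶠ[nhds x] (fun y => g x + Complex.log (f y / f x)) :=
    Filter.eventuallyEq_of_mem hN𝓝 (fun y hy => hclaim y hy)
  have hcat : ContinuousAt (fun y => g x + Complex.log (f y / f x)) x := by
    refine ContinuousAt.add continuousAt_const ?_
    have h1 : ContinuousAt (fun y => f y / f x) x := (hf.div_const _).continuousAt
    have hsl : f x / f x ∈ Complex.slitPlane := by
      rw [div_self (h0 x)]; exact Complex.one_mem_slitPlane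
    exact ContinuousAt.comp (x := x) (continuousAt_clog hsl) h1
  exact hcat.congr_of_eventuallyEq hev

-- PART 5 : unicoherence
private lemma unicoherent_inter_preconnected {X : Type*} [TopologicalSpace X] [NormalSpace X]
    [LocallyPathConnectedSpace X] [SimplyConnectedSpace X] {A B : Set X}
    (hA : IsClosed A) (hB : IsClosed B) (hApre : IsPreconnected A) (hBpre : IsPreconnected B)
    (hcover : A ∪ B = univ) : IsPreconnected (A ∩ B) := by
  classical
  rw [IsPreconnected]  -- maybe not needed; use the definitional intro
  intro u v hu hv hsub hau hbv
  by_contra hne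
  rw [not_nonempty_iff_eq_empty] at hne
  set S : Set X := A ∩ B with hS
  have hSclosed : IsClosed S := hA.inter hB
  set P : Set X := S \ v with hP
  set Q : Set X := S \ u with hQ
  have hPclosed : IsClosed P := hSclosed.sdiff hv
  have hQclosed : IsClosed Q := hSclosed.sdiff hu
  have hPne : P.Nonempty := by
    obtain ⟨a, ha⟩ := hau
    refine ⟨a, ha.1, fun hav => ?_⟩
    have : a ∈ S ∩ (u ∩ v) := ⟨ha.1, ha.2, hav⟩
    rw [hne] at this
    exact this
  have hQne : Q.Nonempty := by
    obtain ⟨b, hb⟩ := hbv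
    refine ⟨b, hb.1, fun hbu => ?_⟩
    have : b ∈ S ∩ (u ∩ v) := ⟨hb.1, hbu, hb.2⟩
    rw [hne] at this
    exact this
  have hdisj : Disjoint P Q := by
    rw [Set.disjoint_left]
    rintro z ⟨hzS, hzv⟩ ⟨-, hzu⟩
    rcases hsub hzS with h | h
    · exact hzu h
    · exact hzv h
  have hPQ : P ∪ Q = S := by
    apply Subset.antisymm
    · rintro z (⟨h, -⟩ | ⟨h, -⟩) <;> exact h
    · intro z hz
      rcases hsub hz with h | h
      · exact Or.inl ⟨hz, fun hzv => by
          have : z ∈ S ∩ (u ∩ v) := ⟨hz, h, hzv⟩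
          rw [hne] at this
          exact this⟩
      · exact Or.inr ⟨hz, fun hzu => by
          have : z ∈ S ∩ (u ∩ v) := ⟨hz, hzu, h⟩
          rw [hne] at this
          exact this⟩
  obtain ⟨U₀, hU₀P, hU₀Q, hU₀range⟩ := exists_continuous_zero_one_of_isClosed hPclosed hQclosed hdisj
  -- define f
  set F : X → ℂ := fun z =>
    if z ∈ A then Complex.exp ((Real.pi : ℂ) * Complex.I * (U₀ z : ℂ))
    else Complex.exp (-((Real.pi : ℂ) * Complex.I * (U₀ z : ℂ))) with hF
  have hcompl : Aᶜ ⊆ B := by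
    intro z hz
    rcases (hcover ▸ mem_univ z : z ∈ A ∪ B) with h | h
    · exact absurd h hz
    · exact h
  have hfrontier : frontier A ⊆ S := by
    intro z hz
    rw [frontier_eq_closure_inter_closure, hA.closure_eq] at hz
    exact ⟨hz.1, (hB.closure_subset_iff.mpr hcompl) hz.2⟩
  have hSval : ∀ z ∈ S, U₀ z = 0 ∨ U₀ z = 1 := by
    intro z hz
    rw [← hPQ] at hz
    rcases hz with h | h
    · exact Or.inl (hU₀P h)
    · exact Or.inr (hU₀Q h)
  have hFc : Continuous F := by
    rw [hF]
    refine Continuous.if ?_ ?_ ?_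
    · intro a ha
      rcases hSval a (hfrontier ha) with h | h
      · rw [h]; norm_num
      · rw [h]
        push_cast
        rw [mul_one, Complex.exp_pi_mul_I, Complex.exp_neg, Complex.exp_pi_mul_I]
        norm_num
    · exact Complex.continuous_exp.comp (continuous_const.mul
        (Complex.continuous_ofReal.comp U₀.continuous))
    · exact Complex.continuous_exp.comp (continuous_const.mul
        (Complex.continuous_ofReal.comp U₀.continuous)).neg
  have hF0 : ∀ z, F z ≠ 0 := by
    intro z
    rw [hF]
    simp only
    split <;> exact Complex.exp_ne_zero _
  obtain ⟨g, hgc, hge⟩ := exp_global_lift hFc hF0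
  -- on A
  have hA1 : ∀ z ∈ A, Complex.exp (g z - (Real.pi : ℂ) * Complex.I * (U₀ z : ℂ)) = 1 := by
    intro z hz
    rw [Complex.exp_sub, hge z, hF]
    simp only [if_pos hz]
    exact div_self (Complex.exp_ne_zero _)
  have hB1 : ∀ z ∈ B, Complex.exp (g z + (Real.pi : ℂ) * Complex.I * (U₀ z : ℂ)) = 1 := by
    intro z hz
    rw [Complex.exp_add, hge z, hF]
    simp only
    by_cases hzA : z ∈ A
    · rw [if_pos hzA]
      rcases hSval z ⟨hzA, hz⟩ with h | h
      · rw [h]; norm_num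
      · rw [h]
        push_cast
        rw [mul_one, Complex.exp_pi_mul_I]
        norm_num
    · rw [if_neg hzA, ← Complex.exp_add, neg_add_cancel, Complex.exp_zero]
  have hgAc : ContinuousOn (fun z => g z - (Real.pi : ℂ) * Complex.I * (U₀ z : ℂ)) A :=
    (hgc.sub (continuous_const.mul (Complex.continuous_ofReal.comp U₀.continuous))).continuousOn
  have hgBc : ContinuousOn (fun z => g z + (Real.pi : ℂ) * Complex.I * (U₀ z : ℂ)) B :=
    (hgc.add (continuous_const.mul (Complex.continuous_ofReal.comp U₀.continuous))).continuousOn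
  obtain ⟨p, hp⟩ := hPne
  obtain ⟨q, hq⟩ := hQne
  have hpS : p ∈ S := hp.1
  have hqS : q ∈ S := hq.1
  have hU₀p : U₀ p = 0 := hU₀P hp
  have hU₀q : U₀ q = 1 := hU₀Q hq
  have heqA := eqOn_of_exp_eq_one hApre hgAc hA1 hpS.1 hqS.1
  have heqB := eqOn_of_exp_eq_one hBpre hgBc hB1 hpS.2 hqS.2
  rw [hU₀p, hU₀q] at heqA heqB
  push_cast at heqA heqB
  rw [mul_zero, sub_zero, mul_one] at heqA
  rw [mul_zero, add_zero, mul_one] at heqB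
  have hcontr : (2:ℂ) * ((Real.pi : ℂ) * Complex.I) = 0 := by linear_combination heqA - heqB
  have hπI : ((Real.pi : ℂ) * Complex.I) ≠ 0 :=
    mul_ne_zero (Complex.ofReal_ne_zero.mpr Real.pi_ne_zero) Complex.I_ne_zero
  norm_num [hπI] at hcontr

/-- Let `D ⊆ ℂ` be a simply connected domain, `D₁` an open connected
subset of `D`, and `U` a connected component of `D \ cl(D₁)` (closure in `D`). Then the
boundary of `U` relative to `D` is connected. -/
theorem relBoundary_component_connected
    (D : Set ℂ) (hD : IsOpen D) (hDconn : IsConnected D)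
    (hsc : SimplyConnectedSpace D)
    (D₁ : Set ℂ) (h1D : D₁ ⊆ D) (h1o : IsOpen D₁) (h1c : IsConnected D₁)
    (U : Set ℂ) (x : ℂ) (hx : x ∈ D \ relClosure D D₁)
    (hU : U = connectedComponentIn (D \ relClosure D D₁) x) :
    IsPreconnected (relBoundary D U) := by
  classical
  set C : Set ℂ := relClosure D D₁ with hC
  set V : Set ℂ := D \ C with hVdef
  have hCD : C ⊆ D := inter_subset_left
  have hVD : V ⊆ D := diff_subset
  have hVopen : IsOpen V := by
    have hveq : V = D \ closure D₁ := by
      rw [hVdef, hC, relClosure, diff_self_inter]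
    rw [hveq]
    exact hD.sdiff isClosed_closure
  have hxV : x ∈ V := hx
  have hUopen : IsOpen U := hU ▸ hVopen.connectedComponentIn
  have hUconn : IsConnected U := hU ▸ isConnected_connectedComponentIn_iff.mpr hxV
  have hUV : U ⊆ V := hU ▸ connectedComponentIn_subset V x
  have keyclo : ∀ w ∈ V, closure (connectedComponentIn V w) ∩ V ⊆ connectedComponentIn V w := by
    intro w hw z hz
    have hzV : z ∈ V := hz.2
    have hnb : connectedComponentIn V z ∈ 𝓝 z :=
      connectedComponentIn_mem_nhds (hVopen.mem_nhds hzV)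
    obtain ⟨y, hy1, hy2⟩ := mem_closure_iff_nhds.mp hz.1 _ hnb
    have h1 : connectedComponentIn V z = connectedComponentIn V y :=
      connectedComponentIn_eq hy1
    have h2 : connectedComponentIn V w = connectedComponentIn V y :=
      connectedComponentIn_eq hy2
    have hzz : z ∈ connectedComponentIn V z := mem_connectedComponentIn hzV
    rw [h1, ← h2] at hzz
    exact hzz
  have boundary_sub : ∀ w ∈ V, D ∩ closure (connectedComponentIn V w) ⊆
      connectedComponentIn V w ∪ C := by
    intro w hw z hz
    by_cases hzC : z ∈ C
    · exact Or.inr hzC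
    · exact Or.inl (keyclo w hw ⟨hz.2, hz.1, hzC⟩)
  have hCne : C.Nonempty := h1c.nonempty.mono (fun z hz => ⟨h1D hz, subset_closure hz⟩)
  have hCpre : IsPreconnected C := h1c.isPreconnected.subset_closure
    (fun z hz => ⟨h1D hz, subset_closure hz⟩) inter_subset_right
  have hCV : Disjoint C V := disjoint_sdiff_self_right
  set Bd : Set ℂ := relBoundary D U with hBd
  set K : Set ℂ := D ∩ closure U with hK
  have hfrontU : frontier U = closure U \ U := hUopen.frontier_eq
  have hUD : U ⊆ D := hUV.trans hVD
  have hUK : U ⊆ K := fun z hz => ⟨hUD hz, subset_closure hz⟩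
  have hKeq : K = U ∪ Bd := by
    rw [hBd, relBoundary, hfrontU, hK]
    ext z
    constructor
    · rintro ⟨hzD, hzc⟩
      by_cases hzU : z ∈ U
      · exact Or.inl hzU
      · exact Or.inr ⟨hzD, hzc, hzU⟩
    · rintro (hzU | ⟨hzD, hzc, -⟩)
      · exact ⟨hUD hzU, subset_closure hzU⟩
      · exact ⟨hzD, hzc⟩
  have hKpre : IsPreconnected K := hUconn.isPreconnected.subset_closure hUK inter_subset_right
  have hbsU := boundary_sub x hxV
  rw [← hU] at hbsU
  have hBdC : Bd ⊆ C := by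
    intro z hz
    rw [hBd, relBoundary, hfrontU] at hz
    rcases hbsU ⟨hz.1, hz.2.1⟩ with h | h
    · exact absurd h hz.2.2
    · exact h
  set W : Set ℂ := D \ U with hW
  have hCW : C ⊆ W := fun z hz => ⟨hCD hz, fun hzU => disjoint_left.mp hCV hz (hUV hzU)⟩
  obtain ⟨c₀, hc₀⟩ := hCne
  have hWpre : IsPreconnected W := by
    apply isPreconnected_of_forall c₀
    intro y hy
    by_cases hyC : y ∈ C
    · exact ⟨C, hCW, hc₀, hyC, hCpre⟩
    · have hyV : y ∈ V := ⟨hy.1, hyC⟩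
      set Uy : Set ℂ := connectedComponentIn V y with hUy
      have hyUy : y ∈ Uy := mem_connectedComponentIn hyV
      have hUyV : Uy ⊆ V := connectedComponentIn_subset V y
      have hUyD : Uy ⊆ D := hUyV.trans hVD
      have hUypre : IsPreconnected (D ∩ closure Uy) :=
        (isConnected_connectedComponentIn_iff.mpr hyV).isPreconnected.subset_closure
          (fun z hz => ⟨hUyD hz, subset_closure hz⟩) inter_subset_right
      have hUyU : Disjoint Uy U := by
        rw [Set.disjoint_left]
        intro z hz1 hz2
        have e1 : connectedComponentIn V z = Uy := (connectedComponentIn_eq hz1).symm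
        have e2 : connectedComponentIn V z = U := by
          rw [hU]
          exact (connectedComponentIn_eq (hU ▸ hz2)).symm
        have : y ∈ U := by rw [← e2, e1]; exact hyUy
        exact hy.2 this
      have hmeet : (C ∩ (D ∩ closure Uy)).Nonempty := by
        by_contra hno
        rw [not_nonempty_iff_eq_empty] at hno
        have hsub2 : D ∩ closure Uy ⊆ Uy := by
          intro z hz
          rcases boundary_sub y hyV hz with h | h
          · exact h
          · have hmm : z ∈ C ∩ (D ∩ closure Uy) := ⟨h, hz⟩
            rw [hno] at hmm
            exact hmm.elim
        have h1 : D ⊆ Uy ∪ (closure Uy)ᶜ := by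
          intro z hz
          by_cases hc : z ∈ closure Uy
          · exact Or.inl (hsub2 ⟨hz, hc⟩)
          · exact Or.inr hc
        have hc₀' : c₀ ∈ (closure Uy)ᶜ := by
          intro hcc
          have hmm : c₀ ∈ C ∩ (D ∩ closure Uy) := ⟨hc₀, hCD hc₀, hcc⟩
          rw [hno] at hmm
          exact hmm.elim
        have h2 : (D ∩ (Uy ∩ (closure Uy)ᶜ)).Nonempty :=
          hDconn.isPreconnected _ _ hVopen.connectedComponentIn
            isClosed_closure.isOpen_compl h1 ⟨y, hUyD hyUy, hyUy⟩ ⟨c₀, hCD hc₀, hc₀'⟩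
        obtain ⟨z, -, hz1, hz2⟩ := h2
        exact hz2 (subset_closure hz1)
      refine ⟨C ∪ (D ∩ closure Uy), ?_, Or.inl hc₀,
        Or.inr ⟨hUyD hyUy, subset_closure hyUy⟩, ?_⟩
      · rintro z (hz | hz)
        · exact hCW hz
        · rcases boundary_sub y hyV hz with h | h
          · exact ⟨hz.1, fun hzU => disjoint_left.mp hUyU h hzU⟩
          · exact hCW h
      · exact hCpre.union' hmeet hUypre
  have hKW_union : K ∪ W = D := by
    apply Subset.antisymm
    · rintro z (hz | hz)
      · exact hz.1
      · exact hz.1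
    · intro z hz
      by_cases hzU : z ∈ U
      · exact Or.inl (hUK hzU)
      · exact Or.inr ⟨hz, hzU⟩
  have hKW_inter : K ∩ W = Bd := by
    rw [hBd, relBoundary, hfrontU, hK, hW]
    ext z
    constructor
    · rintro ⟨⟨hzD, hzc⟩, -, hzU⟩
      exact ⟨hzD, hzc, hzU⟩
    · rintro ⟨hzD, hzc, hzU⟩
      exact ⟨⟨hzD, hzc⟩, hzD, hzU⟩
  -- pass to the subtype
  haveI hsc' : SimplyConnectedSpace ↥D := hsc
  haveI hlpc : LocallyPathConnectedSpace ↥D := hD.locallyPathConnectedSpace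
  set K' : Set ↥D := Subtype.val ⁻¹' K with hK'
  set W' : Set ↥D := Subtype.val ⁻¹' W with hW'
  have hKD : K ⊆ D := inter_subset_left
  have hWD : W ⊆ D := diff_subset
  have hBdD : Bd ⊆ D := by rw [hBd, relBoundary]; exact inter_subset_left
  have himgK : Subtype.val '' K' = K := by
    rw [hK', Subtype.image_preimage_coe, inter_eq_self_of_subset_right hKD]
  have himgW : Subtype.val '' W' = W := by
    rw [hW', Subtype.image_preimage_coe, inter_eq_self_of_subset_right hWD]
  have hK'closed : IsClosed K' := by
    have : K' = Subtype.val ⁻¹' (closure U) := by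
      rw [hK', hK]
      ext z
      simp only [mem_preimage, mem_inter_iff]
      exact ⟨fun h => h.2, fun h => ⟨z.2, h⟩⟩
    rw [this]
    exact isClosed_closure.preimage continuous_subtype_val
  have hW'closed : IsClosed W' := by
    have : W' = Subtype.val ⁻¹' Uᶜ := by
      rw [hW', hW]
      ext z
      simp only [mem_preimage, mem_diff, mem_compl_iff]
      exact ⟨fun h => h.2, fun h => ⟨z.2, h⟩⟩
    rw [this]
    exact (hUopen.isClosed_compl).preimage continuous_subtype_val
  have hK'pre : IsPreconnected K' :=
    Topology.IsInducing.subtypeVal.isPreconnected_image.mp (himgK ▸ hKpre)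
  have hW'pre : IsPreconnected W' :=
    Topology.IsInducing.subtypeVal.isPreconnected_image.mp (himgW ▸ hWpre)
  have hcover' : K' ∪ W' = univ := by
    rw [hK', hW', ← preimage_union, hKW_union]
    exact eq_univ_of_forall (fun z => z.2)
  have happly := unicoherent_inter_preconnected hK'closed hW'closed hK'pre hW'pre hcover'
  have hBd' : K' ∩ W' = Subtype.val ⁻¹' Bd := by
    rw [hK', hW', ← preimage_inter, hKW_inter]
  rw [hBd'] at happly
  have hfinal := Topology.IsInducing.subtypeVal.isPreconnected_image.mpr happly
  rw [Subtype.image_preimage_coe, inter_eq_self_of_subset_right hBdD] at hfinal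
  exact hfinal
end

section
/- Let 𝓕 be a family of holomorphic functions on a simply connected domain D ⊆ ℂ. Then the Julia like set J(𝓕) is connected if and only if the boundary (relative to D) of every connected component of the Fatou like set F(𝓕) is connected. -/
open Filter Topology Set

/-! ### A logarithm lifting theory for simply connected spaces -/

noncomputable section LiftTheory
open Complex unitInterval

/-- Points `a` close to `b` have `a/b` in the slit plane. -/
lemma mem_slitPlane_of_near {a b : ℂ} (h : ‖a - b‖ < ‖b‖) : a / b ∈ Complex.slitPlane := by
  have hb : b ≠ 0 := by
    rintro rfl
    simp at h
    exact absurd h (norm_nonneg a).not_gt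
  by_contra hs
  rw [Complex.mem_slitPlane_iff] at hs
  push_neg at hs
  obtain ⟨h1, h2⟩ := hs
  have key : a - b = (a / b - 1) * b := by field_simp
  have hnorm : ‖a - b‖ = ‖a / b - 1‖ * ‖b‖ := by rw [key, norm_mul]
  have h3 : (1 : ℝ) ≤ ‖a / b - 1‖ := by
    have hre := Complex.abs_re_le_norm (a / b - 1)
    have : (a / b - 1).re = (a / b).re - 1 := by simp
    rw [this] at hre
    have : |(a / b).re - 1| = 1 - (a / b).re := by
      rw [abs_of_nonpos (by linarith)]; ring
    rw [this] at hre
    calc (1:ℝ) ≤ 1 - (a/b).re := by linarith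
      _ ≤ ‖a / b - 1‖ := hre
      _ = ‖a / b - 1‖ := rfl
  have : ‖b‖ ≤ ‖a - b‖ := by
    rw [hnorm]
    nlinarith [norm_nonneg b]
  linarith

/-- Continuous functions into a lattice coset on a preconnected set are constant. -/
lemma lattice_const {Y : Type*} [TopologicalSpace Y] {S : Set Y} (hS : IsPreconnected S)
    {g : Y → ℂ} (hg : ContinuousOn g S)
    (hv : ∀ y ∈ S, ∃ n : ℤ, g y = n * (2 * Real.pi * Complex.I))
    {a b : Y} (ha : a ∈ S) (hb : b ∈ S) : g a = g b := by
  by_contra hne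
  have hT : IsPreconnected (g '' S) := hS.image g hg
  have hlat : ∀ z ∈ g '' S, ∃ n : ℤ, z = n * (2 * Real.pi * Complex.I) := by
    rintro z ⟨y, hy, rfl⟩; exact hv y hy
  have hdist : ∀ z ∈ g '' S, z ≠ g a → Real.pi < dist z (g a) := by
    intro z hz hzne
    obtain ⟨n, hn⟩ := hlat z hz
    obtain ⟨m, hm⟩ := hv a ha
    have : dist z (g a) = |((n - m : ℤ) : ℝ)| * (2 * Real.pi) := by
      rw [hn, hm, dist_eq_norm]
      have : (n : ℂ) * (2 * Real.pi * Complex.I) - m * (2 * Real.pi * Complex.I)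
          = ((n - m : ℤ) : ℂ) * (2 * Real.pi * Complex.I) := by push_cast; ring
      rw [this, norm_mul]
      have h1 : ‖((n - m : ℤ) : ℂ)‖ = |((n - m : ℤ) : ℝ)| := by
        rw [← Complex.ofReal_intCast, Complex.norm_real, Real.norm_eq_abs]
      have h2 : ‖(2 * (Real.pi:ℂ) * Complex.I)‖ = 2 * Real.pi := by
        simp [norm_mul, Complex.norm_real, Real.norm_eq_abs, Complex.norm_I,
          _root_.abs_of_nonneg Real.pi_pos.le]
      rw [h1, h2]
    have hnm : n ≠ m := by
      rintro rfl; exact hzne (by rw [hn, hm])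
    have : (1:ℝ) ≤ |((n - m : ℤ) : ℝ)| := by
      have h4 : (n - m : ℤ) ≠ 0 := sub_ne_zero.2 hnm
      have := Int.one_le_abs h4
      calc (1:ℝ) ≤ ((|n - m| : ℤ) : ℝ) := by exact_mod_cast this
        _ = |((n - m : ℤ) : ℝ)| := by push_cast; ring
    nlinarith [Real.pi_pos]
  set u := Metric.ball (g a) Real.pi with hu
  set v := (Metric.closedBall (g a) Real.pi)ᶜ with hvdef
  have hcover : g '' S ⊆ u ∪ v := by
    intro z hz
    by_cases hzz : z = g a
    · left; rw [hzz]; exact Metric.mem_ball_self Real.pi_pos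
    · right; simp only [hvdef, mem_compl_iff, Metric.mem_closedBall, not_le]
      exact hdist z hz hzz
  have hau : g a ∈ g '' S ∩ u := ⟨mem_image_of_mem g ha, Metric.mem_ball_self Real.pi_pos⟩
  have hbv : g b ∈ g '' S ∩ v := by
    refine ⟨mem_image_of_mem g hb, ?_⟩
    simp only [hvdef, mem_compl_iff, Metric.mem_closedBall, not_le]
    exact hdist (g b) (mem_image_of_mem g hb) (fun h => hne h.symm)
  obtain ⟨z, -, hzu, hzv⟩ := hT u v Metric.isOpen_ball (Metric.isClosed_closedBall.isOpen_compl)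
    hcover ⟨_, hau⟩ ⟨_, hbv⟩
  exact hzv (Metric.ball_subset_closedBall hzu)

/-- Transfer a logarithm lift across a "nowhere antipodal" perturbation. -/
lemma lift_step {α : Type*} [TopologicalSpace α] {f g : α → ℂ}
    (hf : Continuous f) (hg : Continuous g) (hg0 : ∀ x, g x ≠ 0)
    (hslit : ∀ x, f x / g x ∈ Complex.slitPlane)
    (h : ∃ ψ : α → ℂ, Continuous ψ ∧ ∀ x, Complex.exp (ψ x) = g x) :
    ∃ ψ : α → ℂ, Continuous ψ ∧ ∀ x, Complex.exp (ψ x) = f x := by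
  obtain ⟨ψ, hψ, he⟩ := h
  refine ⟨fun x => ψ x + Complex.log (f x / g x), ?_, ?_⟩
  · refine hψ.add ?_
    rw [continuous_iff_continuousAt]
    intro x
    have h1 : ContinuousAt (fun x => f x / g x) x :=
      hf.continuousAt.div hg.continuousAt (hg0 x)
    exact ContinuousAt.comp (x := x) (f := fun y => f y / g y) (continuousAt_clog (hslit x)) h1
  · intro x
    have hne : f x / g x ≠ 0 := Complex.slitPlane_ne_zero (hslit x)
    rw [Complex.exp_add, he, Complex.exp_log hne, mul_comm, div_mul_cancel₀ _ (hg0 x)]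

/-- Every nonvanishing continuous function on the unit square has a continuous logarithm. -/
lemma exists_lift_square (f : I × I → ℂ) (hf : Continuous f) (h0 : ∀ p, f p ≠ 0) :
    ∃ ψ : I × I → ℂ, Continuous ψ ∧ ∀ p, Complex.exp (ψ p) = f p := by
  obtain ⟨p₀, -, hp₀⟩ := isCompact_univ.exists_isMinOn univ_nonempty hf.norm.continuousOn
  have hεpos : 0 < ‖f p₀‖ := norm_pos_iff.2 (h0 p₀)
  have hucont := CompactSpace.uniformContinuous_of_continuous hf
  rw [Metric.uniformContinuous_iff] at hucont
  obtain ⟨δ, hδpos, hδ⟩ := hucont _ hεpos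
  obtain ⟨m, hm⟩ := exists_nat_one_div_lt hδpos
  set n : ℕ := m + 1 with hn
  have hnpos : (0:ℝ) < n := by positivity
  -- the scaling maps
  set sc : ℝ → I × I → I × I := fun c p =>
    (Set.projIcc 0 1 zero_le_one (c * p.1), Set.projIcc 0 1 zero_le_one (c * p.2)) with hsc
  have hsccont : ∀ c, Continuous (sc c) := by
    intro c
    exact ((continuous_projIcc.comp (continuous_const.mul
        (continuous_subtype_val.comp continuous_fst))).prodMk
      (continuous_projIcc.comp (continuous_const.mul
        (continuous_subtype_val.comp continuous_snd))))
  have hscdist : ∀ (c c' : ℝ) (p : I × I), dist (sc c p) (sc c' p) ≤ |c - c'| := by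
    intro c c' p
    rw [Prod.dist_eq]
    have key : ∀ t : I, dist (Set.projIcc 0 1 zero_le_one (c * t))
        (Set.projIcc 0 1 zero_le_one (c' * t)) ≤ |c - c'| := by
      intro t
      have h1 := (LipschitzWith.projIcc (zero_le_one (α := ℝ))).dist_le_mul (c * t) (c' * t)
      have h2 : dist (c * (t:ℝ)) (c' * t) = |c - c'| * t := by
        rw [Real.dist_eq]
        rw [← sub_mul, abs_mul, _root_.abs_of_nonneg t.2.1]
      calc dist (Set.projIcc 0 1 zero_le_one (c * t)) (Set.projIcc 0 1 zero_le_one (c' * t))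
          ≤ 1 * dist (c * (t:ℝ)) (c' * t) := h1
        _ = |c - c'| * t := by rw [one_mul, h2]
        _ ≤ |c - c'| * 1 := by
            apply mul_le_mul_of_nonneg_left t.2.2 (abs_nonneg _)
        _ = |c - c'| := mul_one _
    exact max_le (key p.1) (key p.2)
  -- induction
  have main : ∀ j : ℕ, j ≤ n →
      ∃ ψ : I × I → ℂ, Continuous ψ ∧ ∀ p, Complex.exp (ψ p) = f (sc ((j:ℝ) / n) p) := by
    intro j
    induction j with
    | zero =>
      intro _
      refine ⟨fun _ => Complex.log (f (sc 0 (0, 0))), continuous_const, fun p => ?_⟩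
      have h00 : ((0:ℕ):ℝ)/(n:ℝ) = 0 := by norm_num
      rw [h00, Complex.exp_log (h0 _)]
      congr 1
      simp [hsc, zero_mul]
    | succ j ih =>
      intro hj1
      have hj : j ≤ n := le_of_lt (Nat.lt_of_succ_le hj1)
      obtain ⟨ψ, hψ, he⟩ := ih hj
      refine lift_step ((hf.comp (hsccont _))) ((hf.comp (hsccont _))) (fun p => h0 _)
        (fun p => ?_) ⟨ψ, hψ, he⟩
      apply mem_slitPlane_of_near
      have hdistc : dist (sc ((j+1:ℕ) / n : ℝ) p) (sc ((j:ℝ) / n) p) < δ := by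
        calc dist (sc ((j+1:ℕ) / n : ℝ) p) (sc ((j:ℝ) / n) p) ≤ |((j+1:ℕ):ℝ)/n - (j:ℝ)/n| :=
            hscdist _ _ p
          _ = 1 / n := by
              push_cast
              rw [div_sub_div_same]
              rw [show ((j:ℝ) + 1 - j) = 1 by ring]
              rw [_root_.abs_of_nonneg (by positivity)]
          _ < δ := by rw [hn]; push_cast; exact hm
      have := hδ hdistc
      rw [dist_eq_norm] at this
      calc ‖f (sc ((j+1:ℕ) / n : ℝ) p) - f (sc ((j:ℝ) / n) p)‖ < ‖f p₀‖ := this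
        _ ≤ ‖f (sc ((j:ℝ) / n) p)‖ := hp₀ (mem_univ _)
  obtain ⟨ψ, hψ, he⟩ := main n le_rfl
  refine ⟨ψ, hψ, fun p => ?_⟩
  rw [he]
  congr 1
  have : ((n:ℝ) / n) = 1 := div_self (ne_of_gt hnpos)
  rw [this]
  simp only [hsc, one_mul]
  exact Prod.ext (Set.projIcc_val zero_le_one p.1) (Set.projIcc_val zero_le_one p.2)

/-- Every nonvanishing continuous function on the unit interval has a continuous logarithm. -/
lemma exists_lift_interval (g : I → ℂ) (hg : Continuous g) (h0 : ∀ t, g t ≠ 0) :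
    ∃ Θ : I → ℂ, Continuous Θ ∧ ∀ t, Complex.exp (Θ t) = g t := by
  obtain ⟨ψ, hψ, he⟩ := exists_lift_square (fun p => g p.2) (hg.comp continuous_snd)
    (fun p => h0 _)
  exact ⟨fun t => ψ (0, t), hψ.comp (continuous_const.prodMk continuous_id), fun t => he (0, t)⟩

/-- If two continuous maps have equal exponentials on a preconnected set, their difference
has constant value. -/
lemma exp_eq_const {Y : Type*} [TopologicalSpace Y] {S : Set Y} (hS : IsPreconnected S)
    {g : Y → ℂ} (hg : ContinuousOn g S) (h1 : ∀ y ∈ S, Complex.exp (g y) = 1)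
    {a b : Y} (ha : a ∈ S) (hb : b ∈ S) : g a = g b :=
  lattice_const hS hg (fun y hy => by
    have := (h1 y hy)
    rwa [Complex.exp_eq_one_iff] at this) ha hb

open scoped Classical in
/-- The variation of the logarithm of `g` along the unit interval. -/
noncomputable def wind (g : I → ℂ) : ℂ :=
  if h : Continuous g ∧ ∀ t, g t ≠ 0 then
    (exists_lift_interval g h.1 h.2).choose 1 - (exists_lift_interval g h.1 h.2).choose 0
  else 0

lemma wind_eq {g : I → ℂ} (hg : Continuous g) (h0 : ∀ t, g t ≠ 0) {Θ : I → ℂ}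
    (hΘ : Continuous Θ) (he : ∀ t, Complex.exp (Θ t) = g t) : wind g = Θ 1 - Θ 0 := by
  rw [wind, dif_pos ⟨hg, h0⟩]
  obtain ⟨hΨc, hΨe⟩ := (exists_lift_interval g hg h0).choose_spec
  set Ψ := (exists_lift_interval g hg h0).choose with hΨ
  have key : Ψ 1 - Θ 1 = Ψ 0 - Θ 0 := by
    refine exp_eq_const (S := (univ : Set I)) isPreconnected_univ
      ((hΨc.sub hΘ).continuousOn) (fun t _ => ?_) (mem_univ 1) (mem_univ 0)
    rw [Pi.sub_apply, Complex.exp_sub, hΨe, he, div_self (h0 t)]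
  have h2 : Ψ 1 - Ψ 0 = Θ 1 - Θ 0 := by linear_combination key
  exact h2

lemma exp_wind {g : I → ℂ} (hg : Continuous g) (h0 : ∀ t, g t ≠ 0) :
    Complex.exp (wind g) = g 1 / g 0 := by
  obtain ⟨Θ, hΘ, he⟩ := exists_lift_interval g hg h0
  rw [wind_eq hg h0 hΘ he, Complex.exp_sub, he, he]

lemma wind_trans {X : Type*} [TopologicalSpace X] {f : X → ℂ}
    (hf : Continuous f) (h0 : ∀ x, f x ≠ 0) {a b c : X} (γ : Path a b) (η : Path b c) :
    wind (f ∘ (γ.trans η)) = wind (f ∘ γ) + wind (f ∘ η) := by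
  obtain ⟨Θ, hΘ, he⟩ := exists_lift_interval (f ∘ (γ.trans η))
    (hf.comp (γ.trans η).continuous) (fun t => h0 _)
  set r₁ : I → I := fun t => ⟨(t : ℝ) / 2, by
    constructor
    · linarith [t.2.1]
    · linarith [t.2.2]⟩ with hr₁
  set r₂ : I → I := fun t => ⟨((t : ℝ) + 1) / 2, by
    constructor
    · linarith [t.2.1]
    · linarith [t.2.2]⟩ with hr₂
  have hr₁c : Continuous r₁ := (continuous_subtype_val.div_const 2).subtype_mk _
  have hr₂c : Continuous r₂ :=
    (((continuous_subtype_val.add continuous_const)).div_const 2).subtype_mk _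
  have h₁ : ∀ t : I, (γ.trans η) (r₁ t) = γ t := by
    intro t
    rw [Path.trans_apply]
    have hle : ((r₁ t : ℝ)) ≤ 1 / 2 := by
      simp only [hr₁]
      linarith [t.2.2]
    rw [dif_pos hle]
    exact congrArg γ (Subtype.ext (by simp only [hr₁]; ring))
  have h₂ : ∀ t : I, (γ.trans η) (r₂ t) = η t := by
    intro t
    rw [Path.trans_apply]
    split_ifs with h
    · have ht0 : (t : ℝ) = 0 := by
        simp only [hr₂] at h
        linarith [t.2.1]
      have h2r : (2 * ((r₂ t : ℝ)) : ℝ) = 1 := by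
        simp only [hr₂]
        rw [ht0]
        norm_num
      rw [← Path.extend_apply γ]
      rw [h2r, Path.extend_one]
      have ht : t = 0 := Subtype.ext (by simpa using ht0)
      rw [ht, η.source]
    · exact congrArg η (Subtype.ext (by simp only [hr₂]; push_cast; ring))
  have w₁ : wind (f ∘ γ) = Θ (r₁ 1) - Θ (r₁ 0) := by
    refine wind_eq (hf.comp γ.continuous) (fun t => h0 _) (hΘ.comp hr₁c) (fun t => ?_)
    show Complex.exp (Θ (r₁ t)) = f (γ t)
    rw [he (r₁ t)]
    exact congrArg f (h₁ t)
  have w₂ : wind (f ∘ η) = Θ (r₂ 1) - Θ (r₂ 0) := by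
    refine wind_eq (hf.comp η.continuous) (fun t => h0 _) (hΘ.comp hr₂c) (fun t => ?_)
    show Complex.exp (Θ (r₂ t)) = f (η t)
    rw [he (r₂ t)]
    exact congrArg f (h₂ t)
  have wt : wind (f ∘ (γ.trans η)) = Θ 1 - Θ 0 :=
    wind_eq (hf.comp (γ.trans η).continuous) (fun t => h0 _) hΘ he
  have e₁ : r₁ 0 = 0 := Subtype.ext (by simp [hr₁])
  have e₂ : r₂ 1 = 1 := Subtype.ext (by simp [hr₂])
  have e₃ : r₁ 1 = r₂ 0 := Subtype.ext (by simp [hr₁, hr₂])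
  rw [wt, w₁, w₂, e₁, e₂, e₃]
  ring

lemma wind_homotopic {X : Type*} [TopologicalSpace X] {f : X → ℂ}
    (hf : Continuous f) (h0 : ∀ x, f x ≠ 0) {a b : X} {γ₀ γ₁ : Path a b}
    (h : γ₀.Homotopic γ₁) : wind (f ∘ γ₀) = wind (f ∘ γ₁) := by
  obtain ⟨H⟩ := h
  obtain ⟨Ψ, hΨ, he⟩ := exists_lift_square (fun p => f (H p))
    (hf.comp H.continuous) (fun p => h0 _)
  have hedge : ∀ s : I, Ψ (s, 0) = Ψ (0, 0) ∧ Ψ (s, 1) = Ψ (0, 1) := by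
    intro s
    constructor
    · have key := exp_eq_const (S := (univ : Set I)) isPreconnected_univ
        (g := fun t : I => Ψ (t, 0) - Ψ (0, 0))
        (Continuous.continuousOn
          ((hΨ.comp ((continuous_id.prodMk continuous_const))).sub continuous_const))
        (fun t _ => by
          rw [Complex.exp_sub, he (t, 0), he (0, 0), H.source t, H.source 0, div_self (h0 _)])
        (mem_univ s) (mem_univ 0)
      simp only [sub_self] at key
      linear_combination key
    · have key := exp_eq_const (S := (univ : Set I)) isPreconnected_univ
        (g := fun t : I => Ψ (t, 1) - Ψ (0, 1))
        (Continuous.continuousOn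
          ((hΨ.comp ((continuous_id.prodMk continuous_const))).sub continuous_const))
        (fun t _ => by
          rw [Complex.exp_sub, he (t, 1), he (0, 1), H.target t, H.target 0, div_self (h0 _)])
        (mem_univ s) (mem_univ 0)
      simp only [sub_self] at key
      linear_combination key
  have w₀ : wind (f ∘ γ₀) = Ψ (0, 1) - Ψ (0, 0) := by
    refine wind_eq (hf.comp γ₀.continuous) (fun t => h0 _)
      (hΨ.comp (continuous_const.prodMk continuous_id)) (fun t => ?_)
    show Complex.exp (Ψ (0, t)) = f (γ₀ t)
    rw [he (0, t)]
    exact congrArg f (H.apply_zero t)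
  have w₁ : wind (f ∘ γ₁) = Ψ (1, 1) - Ψ (1, 0) := by
    refine wind_eq (hf.comp γ₁.continuous) (fun t => h0 _)
      (hΨ.comp (continuous_const.prodMk continuous_id)) (fun t => ?_)
    show Complex.exp (Ψ (1, t)) = f (γ₁ t)
    rw [he (1, t)]
    exact congrArg f (H.apply_one t)
  rw [w₀, w₁, (hedge 1).1, (hedge 1).2]

attribute [local instance] Path.Homotopic.setoid

/-- **Global logarithm lifting** on a simply connected, locally path connected space. -/
theorem exists_global_lift {X : Type*} [TopologicalSpace X] [SimplyConnectedSpace X]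
    [LocallyPathConnectedSpace X] {f : X → ℂ} (hf : Continuous f) (h0 : ∀ x, f x ≠ 0) :
    ∃ ψ : X → ℂ, Continuous ψ ∧ ∀ x, Complex.exp (ψ x) = f x := by
  have hpc : PathConnectedSpace X := inferInstance
  obtain ⟨x₀⟩ := hpc.nonempty
  set L : X → ℂ := fun x =>
    Complex.log (f x₀) + wind (f ∘ (PathConnectedSpace.somePath x₀ x)) with hL
  have hwind_indep : ∀ {x : X} (γ : Path x₀ x),
      wind (f ∘ γ) = wind (f ∘ (PathConnectedSpace.somePath x₀ x)) := by
    intro x γ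
    exact wind_homotopic hf h0 (SimplyConnectedSpace.paths_homotopic _ _)
  have hexp : ∀ x, Complex.exp (L x) = f x := by
    intro x
    rw [hL]
    simp only
    rw [Complex.exp_add, Complex.exp_log (h0 x₀),
      exp_wind (hf.comp (PathConnectedSpace.somePath x₀ x).continuous) (fun t => h0 _)]
    show f x₀ * (f ((PathConnectedSpace.somePath x₀ x) 1) / f ((PathConnectedSpace.somePath x₀ x) 0)) = f x
    rw [Path.target, Path.source, mul_comm, div_mul_cancel₀ _ (h0 x₀)]
  refine ⟨L, ?_, hexp⟩
  rw [continuous_iff_continuousAt]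
  intro x
  -- the slit-plane neighborhood
  have hVopen : IsOpen ((fun w : ℂ => w / f x) ⁻¹' Complex.slitPlane) :=
    Complex.isOpen_slitPlane.preimage (continuous_id.div_const (f x))
  have hVx : f x ∈ (fun w : ℂ => w / f x) ⁻¹' Complex.slitPlane := by
    simp only [mem_preimage, div_self (h0 x)]
    exact Complex.one_mem_slitPlane
  have hnhds : f ⁻¹' ((fun w : ℂ => w / f x) ⁻¹' Complex.slitPlane) ∈ 𝓝 x :=
    hf.continuousAt.preimage_mem_nhds (hVopen.mem_nhds hVx)
  obtain ⟨W, ⟨hWnhds, hWpc⟩, hWsub⟩ := (path_connected_basis x).mem_iff.mp hnhds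
  have hxW : x ∈ W := mem_of_mem_nhds hWnhds
  have hLeq : ∀ y ∈ W, L y = L x + Complex.log (f y / f x) := by
    intro y hy
    have hJ : JoinedIn W x y := hWpc.joinedIn x hxW y hy
    set η := hJ.somePath with hη
    have hmem : ∀ t, f (η t) / f x ∈ Complex.slitPlane := fun t => hWsub (hJ.somePath_mem t)
    have hwη : wind (f ∘ η) = Complex.log (f y / f x) := by
      have hΘc : Continuous (fun t : I => L x + Complex.log (f (η t) / f x)) := by
        refine continuous_const.add ?_
        rw [continuous_iff_continuousAt]
        intro t
        have h1 : ContinuousAt (fun t : I => f (η t) / f x) t :=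
          ((hf.comp η.continuous).continuousAt).div continuousAt_const (h0 x)
        exact ContinuousAt.comp (x := t) (f := fun t : I => f (η t) / f x)
          (continuousAt_clog (hmem t)) h1
      have hΘe : ∀ t : I, Complex.exp (L x + Complex.log (f (η t) / f x)) = (f ∘ η) t := by
        intro t
        rw [Complex.exp_add, hexp x, Complex.exp_log (div_ne_zero (h0 _) (h0 x)),
          mul_comm, div_mul_cancel₀ _ (h0 x)]
        rfl
      rw [wind_eq (hf.comp η.continuous) (fun t => h0 _) hΘc hΘe]
      show L x + Complex.log (f (η 1) / f x) - (L x + Complex.log (f (η 0) / f x))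
        = Complex.log (f y / f x)
      rw [η.target, η.source, div_self (h0 x), Complex.log_one]
      ring
    calc L y = Complex.log (f x₀) + wind (f ∘ (PathConnectedSpace.somePath x₀ y)) := rfl
      _ = Complex.log (f x₀) + wind (f ∘ ((PathConnectedSpace.somePath x₀ x).trans η)) := by
          rw [hwind_indep ((PathConnectedSpace.somePath x₀ x).trans η)]
      _ = Complex.log (f x₀) + (wind (f ∘ (PathConnectedSpace.somePath x₀ x)) + wind (f ∘ η)) := by
          rw [wind_trans hf h0]
      _ = L x + Complex.log (f y / f x) := by rw [hwη, hL]; ring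
  have hfla : ContinuousAt (fun y => L x + Complex.log (f y / f x)) x := by
    refine continuousAt_const.add ?_
    have h1 : ContinuousAt (fun y => f y / f x) x := hf.continuousAt.div continuousAt_const (h0 x)
    exact ContinuousAt.comp (x := x) (f := fun y => f y / f x)
      (continuousAt_clog (by simp only [div_self (h0 x)]; exact Complex.one_mem_slitPlane)) h1
  refine hfla.congr ?_
  filter_upwards [hWnhds] with y hy
  exact (hLeq y hy).symm


end LiftTheory

section Unicoherence
open Complex

/-- **Unicoherence** of a simply connected planar domain: if `D = C₁ ∪ C₂` with `C₁, C₂`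
preconnected and relatively closed in `D`, then `C₁ ∩ C₂` is preconnected. -/
theorem unicoherence {D C₁ C₂ : Set ℂ} (hD : IsOpen D) (hsc : SimplyConnectedSpace D)
    (h1D : C₁ ⊆ D) (h2D : C₂ ⊆ D) (h1c : IsPreconnected C₁) (h2c : IsPreconnected C₂)
    (h1cl : D ∩ closure C₁ ⊆ C₁) (h2cl : D ∩ closure C₂ ⊆ C₂) (hunion : D ⊆ C₁ ∪ C₂) :
    IsPreconnected (C₁ ∩ C₂) := by
  classical
  rintro u v hu hv hcov ⟨p, hpB, hpu⟩ ⟨q, hqB, hqv⟩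
  by_contra hempty
  rw [Set.not_nonempty_iff_eq_empty] at hempty
  set B := C₁ ∩ C₂ with hB
  set P := B ∩ u with hP
  set Q := B ∩ v with hQ
  have hBuv : B ∩ (u ∩ v) = ∅ := hempty
  have hPQB : B = P ∪ Q := by
    apply Subset.antisymm
    · intro z hz
      rcases hcov hz with h | h
      · exact Or.inl ⟨hz, h⟩
      · exact Or.inr ⟨hz, h⟩
    · rintro z (⟨h, -⟩ | ⟨h, -⟩) <;> exact h
  have hPQdisj : P ∩ Q = ∅ := by
    rw [hP, hQ]
    rw [← hBuv]
    ext z; constructor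
    · rintro ⟨⟨hz, hzu⟩, ⟨-, hzv⟩⟩; exact ⟨hz, hzu, hzv⟩
    · rintro ⟨hz, hzu, hzv⟩; exact ⟨⟨hz, hzu⟩, hz, hzv⟩
  -- relative closedness of P and Q in D
  have hPrel : D ∩ closure P ⊆ P := by
    rintro z ⟨hzD, hzc⟩
    have hz1 : z ∈ C₁ := h1cl ⟨hzD, closure_mono (fun w hw => hw.1.1) hzc⟩
    have hz2 : z ∈ C₂ := h2cl ⟨hzD, closure_mono (fun w hw => hw.1.2) hzc⟩
    have hzB : z ∈ B := ⟨hz1, hz2⟩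
    rcases hcov hzB with h | h
    · exact ⟨hzB, h⟩
    · exfalso
      obtain ⟨w, hwP, hwv⟩ := mem_closure_iff.1 hzc v hv h
      have : w ∈ B ∩ (u ∩ v) := ⟨hwv.1, hwv.2, hwP⟩
      rw [hBuv] at this
      exact this
  have hQrel : D ∩ closure Q ⊆ Q := by
    rintro z ⟨hzD, hzc⟩
    have hz1 : z ∈ C₁ := h1cl ⟨hzD, closure_mono (fun w hw => hw.1.1) hzc⟩
    have hz2 : z ∈ C₂ := h2cl ⟨hzD, closure_mono (fun w hw => hw.1.2) hzc⟩
    have hzB : z ∈ B := ⟨hz1, hz2⟩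
    rcases hcov hzB with h | h
    · exfalso
      obtain ⟨w, hwu, hwQ⟩ := mem_closure_iff.1 hzc u hu h
      have : w ∈ B ∩ (u ∩ v) := ⟨hwQ.1, hwu, hwQ.2⟩
      rw [hBuv] at this
      exact this
    · exact ⟨hzB, h⟩
  -- move to the subtype X := D
  set X := D
  have hloc : LocallyPathConnectedSpace X := hD.locPathConnectedSpace
  set P' : Set X := Subtype.val ⁻¹' P with hP'
  set Q' : Set X := Subtype.val ⁻¹' Q with hQ'
  set C₁' : Set X := Subtype.val ⁻¹' C₁ with hC₁'
  set C₂' : Set X := Subtype.val ⁻¹' C₂ with hC₂'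
  have hclosed : ∀ (S : Set ℂ), (D ∩ closure S ⊆ S) →
      IsClosed (Subtype.val ⁻¹' S : Set X) := by
    intro S hS
    have : (Subtype.val ⁻¹' S : Set X) = Subtype.val ⁻¹' (closure S) := by
      apply Subset.antisymm
      · exact fun z hz => subset_closure hz
      · exact fun z hz => hS ⟨z.2, hz⟩
    rw [this]
    exact isClosed_closure.preimage continuous_subtype_val
  have hP'closed : IsClosed P' := hclosed P hPrel
  have hQ'closed : IsClosed Q' := hclosed Q hQrel
  have hC₁'closed : IsClosed C₁' := hclosed C₁ h1cl
  have hC₂'closed : IsClosed C₂' := hclosed C₂ h2cl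
  have hdisj : Disjoint P' Q' := by
    rw [Set.disjoint_left]
    rintro z hzP hzQ
    have : (z : ℂ) ∈ P ∩ Q := ⟨hzP, hzQ⟩
    rw [hPQdisj] at this
    exact this
  obtain ⟨g, hg0, hg1, hg01⟩ := exists_continuous_zero_one_of_isClosed hP'closed hQ'closed hdisj
  have hcover' : C₁' ∪ C₂' = (univ : Set X) := by
    apply Subset.antisymm (subset_univ _)
    intro z _
    rcases hunion z.2 with h | h
    · exact Or.inl h
    · exact Or.inr h
  have hcompl : C₁'ᶜ ⊆ C₂' := by
    intro z hz
    rcases hunion z.2 with h | h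
    · exact absurd h hz
    · exact h
  -- the circle-valued map
  set f : X → ℂ := C₁'.piecewise (fun z => Complex.exp (Real.pi * g z * Complex.I))
    (fun z => Complex.exp (-(Real.pi * g z) * Complex.I)) with hfdef
  have hBsub : ∀ z : X, (z : ℂ) ∈ B → ((z : ℂ) ∈ P ∨ (z : ℂ) ∈ Q) := by
    intro z hz
    rw [hPQB] at hz
    exact hz
  have hagree : ∀ z : X, (z : ℂ) ∈ B →
      Complex.exp (Real.pi * g z * Complex.I) = Complex.exp (-(Real.pi * g z) * Complex.I) := by
    intro z hz
    rcases hBsub z hz with h | h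
    · have : g z = 0 := hg0 h
      rw [this]
      norm_num
    · have : g z = 1 := hg1 h
      rw [this]
      push_cast
      rw [mul_one]
      rw [Complex.exp_pi_mul_I]
      rw [neg_mul, Complex.exp_neg, Complex.exp_pi_mul_I]
      norm_num
  have hfront : ∀ z ∈ frontier C₁', (z : ℂ) ∈ B := by
    intro z hz
    have hz1 : z ∈ C₁' := hC₁'closed.frontier_subset hz
    have hz2 : z ∈ C₂' := by
      have : z ∈ closure (C₁'ᶜ) := by
        rw [frontier_eq_closure_inter_closure] at hz
        exact hz.2
      have := closure_mono hcompl this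
      rwa [hC₂'closed.closure_eq] at this
    exact ⟨hz1, hz2⟩
  have hfcont : Continuous f := by
    refine Continuous.piecewise (fun a ha => hagree a (hfront a ha)) ?_ ?_
    · exact Complex.continuous_exp.comp
        (((continuous_const.mul (Complex.continuous_ofReal.comp g.continuous)).mul continuous_const))
    · exact Complex.continuous_exp.comp
        ((((continuous_const.mul (Complex.continuous_ofReal.comp g.continuous)).neg).mul continuous_const))
  have hf0 : ∀ z, f z ≠ 0 := by
    intro z
    rw [hfdef]
    by_cases hz : z ∈ C₁'
    · rw [Set.piecewise_eq_of_mem _ _ _ hz]; exact Complex.exp_ne_zero _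
    · rw [Set.piecewise_eq_of_notMem _ _ _ hz]; exact Complex.exp_ne_zero _
  obtain ⟨ψ, hψc, hψe⟩ := exists_global_lift hfcont hf0
  -- preconnectedness of C₁' and C₂'
  have hpre : ∀ (S : Set ℂ), S ⊆ D → IsPreconnected S →
      IsPreconnected (Subtype.val ⁻¹' S : Set X) := by
    intro S hSD hSc
    have himg : Subtype.val '' (Subtype.val ⁻¹' S : Set X) = S := by
      rw [Subtype.image_preimage_coe]
      exact inter_eq_self_of_subset_right hSD
    have := Topology.IsInducing.subtypeVal (t := D).isPreconnected_image
      (s := (Subtype.val ⁻¹' S : Set X))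
    rw [himg] at this
    exact this.mp hSc
  have h1c' : IsPreconnected C₁' := hpre C₁ h1D h1c
  have h2c' : IsPreconnected C₂' := hpre C₂ h2D h2c
  -- the two points
  set p' : X := ⟨p, h1D hpB.1⟩ with hp'
  set q' : X := ⟨q, h1D hqB.1⟩ with hq'
  have hp'P : p' ∈ P' := by show p ∈ P; exact ⟨hpB, hpu⟩
  have hq'Q : q' ∈ Q' := by show q ∈ Q; exact ⟨hqB, hqv⟩
  have hp'1 : p' ∈ C₁' := hpB.1
  have hp'2 : p' ∈ C₂' := hpB.2
  have hq'1 : q' ∈ C₁' := hqB.1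
  have hq'2 : q' ∈ C₂' := hqB.2
  have hgp : g p' = 0 := hg0 hp'P
  have hgq : g q' = 1 := hg1 hq'Q
  -- constancy of the two lattice-valued maps
  have key : ∀ (s : ℝ → ℝ) (C' : Set X), IsPreconnected C' →
      (∀ z ∈ C', Complex.exp (ψ z + s (g z) * Complex.I) = 1) → True := fun _ _ _ _ => trivial
  have hq₁ : ∀ z ∈ C₁', Complex.exp (ψ z - Real.pi * g z * Complex.I) = 1 := by
    intro z hz
    rw [Complex.exp_sub, hψe]
    rw [hfdef, Set.piecewise_eq_of_mem _ _ _ hz]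
    exact div_self (Complex.exp_ne_zero _)
  have hq₂ : ∀ z ∈ C₂', Complex.exp (ψ z + Real.pi * g z * Complex.I) = 1 := by
    intro z hz
    by_cases hz1 : z ∈ C₁'
    · rcases hBsub z ⟨hz1, hz⟩ with h | h
      · have h0 : g z = 0 := hg0 h
        rw [Complex.exp_add, hψe, hfdef, Set.piecewise_eq_of_mem _ _ _ hz1, h0]
        norm_num
      · have h1 : g z = 1 := hg1 h
        rw [Complex.exp_add, hψe, hfdef, Set.piecewise_eq_of_mem _ _ _ hz1, h1]
        push_cast
        rw [mul_one, Complex.exp_pi_mul_I]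
        norm_num
    · rw [Complex.exp_add, hψe, hfdef, Set.piecewise_eq_of_notMem _ _ _ hz1]
      rw [← Complex.exp_add]
      rw [show -(Real.pi * g z) * Complex.I + Real.pi * g z * Complex.I = 0 by ring]
      exact Complex.exp_zero
  have hc₁ : ψ p' - Real.pi * g p' * Complex.I = ψ q' - Real.pi * g q' * Complex.I := by
    refine lattice_const (g := fun z : X => ψ z - (Real.pi : ℂ) * ((g z : ℝ) : ℂ) * Complex.I)
      h1c' (Continuous.continuousOn ?_) (fun z hz => ?_) hp'1 hq'1
    · exact hψc.sub (((continuous_const.mul (Complex.continuous_ofReal.comp g.continuous)).mul continuous_const))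
    · exact Complex.exp_eq_one_iff.mp (hq₁ z hz)
  have hc₂ : ψ p' + Real.pi * g p' * Complex.I = ψ q' + Real.pi * g q' * Complex.I := by
    refine lattice_const (g := fun z : X => ψ z + (Real.pi : ℂ) * ((g z : ℝ) : ℂ) * Complex.I)
      h2c' (Continuous.continuousOn ?_) (fun z hz => ?_) hp'2 hq'2
    · exact hψc.add (((continuous_const.mul (Complex.continuous_ofReal.comp g.continuous)).mul continuous_const))
    · exact Complex.exp_eq_one_iff.mp (hq₂ z hz)
  rw [hgp, hgq] at hc₁ hc₂
  push_cast at hc₁ hc₂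
  have : (2 : ℂ) * Real.pi * Complex.I = 0 := by linear_combination hc₁ - hc₂
  have hpi : (Real.pi : ℂ) ≠ 0 := by
    exact_mod_cast Real.pi_ne_zero
  simp [Complex.I_ne_zero, hpi] at this


end Unicoherence

section MainLemmas

variable {D : Set ℂ} {𝓕 : Set (ℂ → ℂ)}

lemma fatou_isOpen (D : Set ℂ) (𝓕 : Set (ℂ → ℂ)) : IsOpen (FatouSet D 𝓕) := by
  rw [isOpen_iff_mem_nhds]
  rintro z ⟨hzD, N, hND, hNn, hNp⟩
  refine Filter.mem_of_superset (interior_mem_nhds.2 hNn) ?_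
  intro w hw
  exact ⟨hND (interior_subset hw), N, hND, mem_interior_iff_mem_nhds.mp hw, hNp⟩

lemma fatou_subset : FatouSet D 𝓕 ⊆ D := fun _ hz => hz.1

lemma julia_relClosed (hD : IsOpen D) :
    D ∩ closure (JuliaSet D 𝓕) ⊆ JuliaSet D 𝓕 := by
  rintro z ⟨hzD, hzc⟩
  refine ⟨hzD, fun hzF => ?_⟩
  obtain ⟨w, hwF, hwJ⟩ := mem_closure_iff.1 hzc _ (fatou_isOpen D 𝓕) hzF
  exact hwJ.2 hwF

/-- The relative boundary of any connected component of the Fatou set lies in the Julia set. -/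
lemma relBoundary_subset_julia (hD : IsOpen D) (w : ℂ) :
    relBoundary D (connectedComponentIn (FatouSet D 𝓕) w) ⊆ JuliaSet D 𝓕 := by
  rintro y ⟨hyD, hyf⟩
  set F := FatouSet D 𝓕
  set U := connectedComponentIn F w
  have hUopen : IsOpen U := (fatou_isOpen D 𝓕).connectedComponentIn
  have hynU : y ∉ U := by
    intro hyU
    rw [hUopen.frontier_eq] at hyf
    exact hyf.2 hyU
  refine ⟨hyD, fun hyF => ?_⟩
  have hyV : y ∈ connectedComponentIn F y := mem_connectedComponentIn hyF
  have hVopen : IsOpen (connectedComponentIn F y) := (fatou_isOpen D 𝓕).connectedComponentIn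
  have hycl : y ∈ closure U := frontier_subset_closure hyf
  obtain ⟨z, hzV, hzU⟩ := mem_closure_iff.1 hycl _ hVopen hyV
  have h1 : connectedComponentIn F y = connectedComponentIn F z := connectedComponentIn_eq hzV
  have h2 : U = connectedComponentIn F z := connectedComponentIn_eq hzU
  rw [h1, ← h2] at hyV
  exact hynU hyV

/-- If the Julia set is nonempty, each Fatou component has nonempty relative boundary. -/
lemma relBoundary_nonempty (hD : IsOpen D) (hDconn : IsConnected D)
    (hJ : (JuliaSet D 𝓕).Nonempty) {w : ℂ} (hw : w ∈ FatouSet D 𝓕) :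
    (relBoundary D (connectedComponentIn (FatouSet D 𝓕) w)).Nonempty := by
  set F := FatouSet D 𝓕
  set U := connectedComponentIn F w
  by_contra hne
  rw [Set.not_nonempty_iff_eq_empty] at hne
  have hUopen : IsOpen U := (fatou_isOpen D 𝓕).connectedComponentIn
  have hclU : D ∩ closure U ⊆ U := by
    rintro z ⟨hzD, hzc⟩
    by_cases hzU : z ∈ U
    · exact hzU
    · exfalso
      have : z ∈ relBoundary D U := ⟨hzD, hzc, by rwa [hUopen.interior_eq]⟩
      rw [hne] at this
      exact this
  have hDU : D ⊆ U := by
    have := hDconn.isPreconnected U (closure U)ᶜ hUopen isClosed_closure.isOpen_compl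
      (fun z hz => by
        by_cases h : z ∈ closure U
        · exact Or.inl (hclU ⟨hz, h⟩)
        · exact Or.inr h)
      ⟨w, fatou_subset hw, mem_connectedComponentIn hw⟩
    intro z hzD
    by_contra hzU
    have h2 : (D ∩ (closure U)ᶜ).Nonempty := by
      refine ⟨z, hzD, fun hc => hzU (hclU ⟨hzD, hc⟩)⟩
    obtain ⟨y, -, hyU, hyc⟩ := this h2
    exact hyc (subset_closure hyU)
  obtain ⟨j, hjD, hjF⟩ := hJ
  exact hjF (connectedComponentIn_subset F w (hDU hjD))

/-- A preconnected set meeting a set and its complement meets its frontier. -/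
lemma preconn_meets_frontier {N V : Set ℂ} (hN : IsPreconnected N) (hV : IsOpen V)
    {a b : ℂ} (ha : a ∈ N ∩ V) (hb : b ∈ N) (hbV : b ∉ V) : (N ∩ frontier V).Nonempty := by
  by_contra hne
  rw [Set.not_nonempty_iff_eq_empty] at hne
  have hbc : b ∉ closure V := by
    intro hbc
    have : b ∈ frontier V := ⟨hbc, by rwa [hV.interior_eq]⟩
    have : b ∈ N ∩ frontier V := ⟨hb, this⟩
    rw [hne] at this
    exact this
  have hcov : N ⊆ V ∪ (closure V)ᶜ := by
    intro z hz
    by_cases h : z ∈ closure V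
    · left
      by_cases h2 : z ∈ V
      · exact h2
      · exfalso
        have : z ∈ N ∩ frontier V := ⟨hz, h, by rwa [hV.interior_eq]⟩
        rw [hne] at this
        exact this
    · exact Or.inr h
  obtain ⟨y, -, hyV, hyc⟩ := hN V (closure V)ᶜ hV isClosed_closure.isOpen_compl hcov
    ⟨a, ha.1, ha.2⟩ ⟨b, hb, hbc⟩
  exact hyc (subset_closure hyV)


end MainLemmas

/-- For a family `𝓕` of holomorphic functions on a simply connected
domain `D`, the Julia like set `J(𝓕)` is connected if and only if the boundary (relative
to `D`) of every connected component of the Fatou like set `F(𝓕)` is connected. -/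
theorem julia_connected_iff_fatou_components_boundary_connected
    (D : Set ℂ) (hD : IsOpen D) (hDconn : IsConnected D)
    (hsc : SimplyConnectedSpace D)
    (𝓕 : Set (ℂ → ℂ)) (hol : ∀ f ∈ 𝓕, DifferentiableOn ℂ f D) :
    IsPreconnected (JuliaSet D 𝓕) ↔
      ∀ x ∈ FatouSet D 𝓕,
        IsPreconnected (relBoundary D (connectedComponentIn (FatouSet D 𝓕) x)) := by
  set F := FatouSet D 𝓕 with hF
  set J := JuliaSet D 𝓕 with hJdef
  have hFopen : IsOpen F := fatou_isOpen D 𝓕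
  have hFD : F ⊆ D := fatou_subset
  constructor
  · -- J connected → boundaries connected
    intro hJ x hx
    set U := connectedComponentIn F x with hU
    have hUopen : IsOpen U := hFopen.connectedComponentIn
    have hUpre : IsPreconnected U := isPreconnected_connectedComponentIn
    have hUF : U ⊆ F := connectedComponentIn_subset F x
    have hUx : x ∈ U := mem_connectedComponentIn hx
    by_cases hJne : J.Nonempty
    · -- use unicoherence
      set C₁ := D ∩ closure U with hC₁
      set C₂ := D \ U with hC₂
      have h1D : C₁ ⊆ D := inter_subset_left
      have h2D : C₂ ⊆ D := diff_subset
      have h1c : IsPreconnected C₁ := by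
        refine hUpre.subset_closure (fun z hz => ⟨hFD (hUF hz), subset_closure hz⟩) ?_
        exact inter_subset_right
      have hJC₂ : J ⊆ C₂ := fun z hz => ⟨hz.1, fun hzU => hz.2 (hUF hzU)⟩
      have h2c : IsPreconnected C₂ := by
        obtain ⟨j₀, hj₀⟩ := id hJne
        set T : ℂ → Set ℂ := fun z => J ∪ (D ∩ closure (connectedComponentIn F z)) with hT
        have hTsub : ∀ z ∈ C₂, T z ⊆ C₂ := by
          intro z hz w hw
          rcases hw with hw | hw
          · exact hJC₂ hw
          · by_cases hzF : z ∈ F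
            · set V := connectedComponentIn F z with hV
              have hVU : V ≠ U := by
                intro hVU
                exact hz.2 (hVU ▸ mem_connectedComponentIn hzF)
              have hVopen : IsOpen V := hFopen.connectedComponentIn
              refine ⟨hw.1, fun hwU => ?_⟩
              -- w ∈ D ∩ closure V and w ∈ U
              obtain ⟨y, hyU, hyV⟩ := mem_closure_iff.1 hw.2 U hUopen hwU
              have h1 : V = connectedComponentIn F y := connectedComponentIn_eq hyV
              have h2 : U = connectedComponentIn F y := connectedComponentIn_eq hyU
              exact hVU (h1.trans h2.symm)
            · rw [connectedComponentIn_eq_empty hzF] at hw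
              simp at hw
        have hTpre : ∀ z ∈ C₂, IsPreconnected (T z) := by
          intro z hz
          show IsPreconnected (J ∪ (D ∩ closure (connectedComponentIn F z)))
          by_cases hzF : z ∈ F
          · obtain ⟨y, hyD, hyf⟩ := relBoundary_nonempty hD hDconn hJne hzF
            have hyJ : y ∈ J := relBoundary_subset_julia hD z ⟨hyD, hyf⟩
            have hyC : y ∈ D ∩ closure (connectedComponentIn F z) :=
              ⟨hyD, frontier_subset_closure hyf⟩
            refine IsPreconnected.union y hyJ hyC hJ ?_
            refine (isPreconnected_connectedComponentIn
              (x := z) (F := F)).subset_closure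
              (fun w hw => ⟨hFD (connectedComponentIn_subset F z hw), subset_closure hw⟩)
              inter_subset_right
          · rw [connectedComponentIn_eq_empty hzF]
            simpa only [closure_empty, inter_empty, union_empty] using hJ
        have hC₂eq : C₂ = ⋃₀ ((fun z => T z) '' C₂) := by
          apply Subset.antisymm
          · intro z hz
            refine ⟨T z, mem_image_of_mem _ hz, ?_⟩
            by_cases hzF : z ∈ F
            · exact Or.inr ⟨h2D hz, subset_closure (mem_connectedComponentIn hzF)⟩
            · exact Or.inl ⟨hz.1, hzF⟩
          · intro z hz
            obtain ⟨S, ⟨w, hwC, rfl⟩, hzS⟩ := hz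
            exact hTsub w hwC hzS
        rw [hC₂eq]
        refine isPreconnected_sUnion j₀ _ ?_ ?_
        · rintro S ⟨w, hwC, rfl⟩
          exact Or.inl hj₀
        · rintro S ⟨w, hwC, rfl⟩
          exact hTpre w hwC
      have h1cl : D ∩ closure C₁ ⊆ C₁ := by
        rintro z ⟨hzD, hzc⟩
        exact ⟨hzD, closure_minimal inter_subset_right isClosed_closure hzc⟩
      have h2cl : D ∩ closure C₂ ⊆ C₂ := by
        rintro z ⟨hzD, hzc⟩
        refine ⟨hzD, fun hzU => ?_⟩
        obtain ⟨y, hyU, hyC⟩ := mem_closure_iff.1 hzc U hUopen hzU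
        exact hyC.2 hyU
      have hunion : D ⊆ C₁ ∪ C₂ := by
        intro z hz
        by_cases h : z ∈ U
        · exact Or.inl ⟨hz, subset_closure h⟩
        · exact Or.inr ⟨hz, h⟩
      have := unicoherence hD hsc h1D h2D h1c h2c h1cl h2cl hunion
      have heq : C₁ ∩ C₂ = relBoundary D U := by
        ext z
        constructor
        · rintro ⟨⟨hzD, hzc⟩, hzD2, hzU⟩
          exact ⟨hzD, hzc, by rwa [hUopen.interior_eq]⟩
        · rintro ⟨hzD, hzf⟩
          have hznU : z ∉ U := by rw [hUopen.frontier_eq] at hzf; exact hzf.2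
          exact ⟨⟨hzD, frontier_subset_closure hzf⟩, hzD, hznU⟩
      rwa [heq] at this
    · -- J = ∅ : boundary is empty
      rw [Set.not_nonempty_iff_eq_empty] at hJne
      have hDF : D ⊆ F := by
        intro z hz
        by_contra hzF
        have : z ∈ J := ⟨hz, hzF⟩
        rw [hJne] at this
        exact this
      have hFeq : F = D := Subset.antisymm hFD hDF
      have hUeq : U = D := by
        rw [hU, hFeq]
        exact hDconn.isPreconnected.connectedComponentIn (hFeq ▸ hFD hx)
      have : relBoundary D U = ∅ := by
        rw [hUeq]
        ext z
        simp only [relBoundary, mem_inter_iff, mem_empty_iff_false, iff_false]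
        rintro ⟨hzD, hzf⟩
        rw [frontier, hD.interior_eq] at hzf
        exact hzf.2 hzD
      rw [this]
      exact isPreconnected_empty
  · -- boundaries connected → J connected
    intro h
    intro u v hu hv hcov hJu hJv
    by_contra hempty
    rw [Set.not_nonempty_iff_eq_empty] at hempty
    obtain ⟨a, haJ, hau⟩ := hJu
    obtain ⟨b, hbJ, hbv⟩ := hJv
    have hJne : J.Nonempty := ⟨a, haJ⟩
    -- the separation claim, proved symmetrically
    have claim : ∀ u' v' : Set ℂ, IsOpen u' → IsOpen v' → J ∩ (u' ∩ v') = ∅ →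
        ∀ z ∈ (J ∩ u') ∪ {w | w ∈ F ∧ relBoundary D (connectedComponentIn F w) ⊆ u'},
        z ∉ closure ((J ∩ v') ∪ {w | w ∈ F ∧ relBoundary D (connectedComponentIn F w) ⊆ v'}) := by
      intro u' v' hu' hv' hdisj z hz hcl
      rw [closure_union] at hcl
      rcases hz with ⟨hzJ, hzu⟩ | ⟨hzF, hzrb⟩
      · -- z ∈ J ∩ u'
        rcases hcl with hcl | hcl
        · -- z in closure (J ∩ v')
          have hzv' : z ∈ J ∩ v' := by
            have hzJ2 : z ∈ J := hzJ
            by_cases hzv : z ∈ v'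
            · exact ⟨hzJ2, hzv⟩
            · exfalso
              obtain ⟨y, hyu, hyJv⟩ := mem_closure_iff.1 hcl u' hu' hzu
              have : y ∈ J ∩ (u' ∩ v') := ⟨hyJv.1, hyu, hyJv.2⟩
              rw [hdisj] at this
              exact this
          have : z ∈ J ∩ (u' ∩ v') := ⟨hzJ, hzu, hzv'.2⟩
          rw [hdisj] at this
          exact this
        · -- z in closure of union of components with boundary ⊆ v'
          have hzD : z ∈ D := hzJ.1
          obtain ⟨r, hr, hball⟩ := Metric.isOpen_iff.1 (hD.inter hu') z ⟨hzD, hzu⟩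
          obtain ⟨w, hwball, hwF, hwrb⟩ :=
            mem_closure_iff.1 hcl (Metric.ball z r) Metric.isOpen_ball (Metric.mem_ball_self hr)
          set V := connectedComponentIn F w with hV
          have hVopen : IsOpen V := hFopen.connectedComponentIn
          have hzV : z ∉ V := fun hzV => hzJ.2 (connectedComponentIn_subset F w hzV)
          have hwV : w ∈ V := mem_connectedComponentIn hwF
          obtain ⟨y, hyball, hyf⟩ := preconn_meets_frontier
            (convex_ball z r).isPreconnected hVopen ⟨hwball, hwV⟩
            (Metric.mem_ball_self hr) hzV
          have hyD : y ∈ D := (hball hyball).1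
          have hyu' : y ∈ u' := (hball hyball).2
          have hyv' : y ∈ v' := hwrb ⟨hyD, hyf⟩
          have hyJ : y ∈ J := relBoundary_subset_julia hD w ⟨hyD, hyf⟩
          have : y ∈ J ∩ (u' ∩ v') := ⟨hyJ, hyu', hyv'⟩
          rw [hdisj] at this
          exact this
      · -- z in a Fatou component with boundary ⊆ u'
        set U := connectedComponentIn F z with hU
        have hUopen : IsOpen U := hFopen.connectedComponentIn
        have hzU : z ∈ U := mem_connectedComponentIn hzF
        have hUdisj : U ∩ ((J ∩ v') ∪
            {w | w ∈ F ∧ relBoundary D (connectedComponentIn F w) ⊆ v'}) = ∅ := by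
          ext y
          simp only [mem_inter_iff, mem_empty_iff_false, iff_false, not_and]
          rintro hyU (⟨hyJ, -⟩ | ⟨hyF, hyrb⟩)
          · exact hyJ.2 (connectedComponentIn_subset F z hyU)
          · have hcomp : U = connectedComponentIn F y := connectedComponentIn_eq hyU
            rw [← hcomp] at hyrb
            obtain ⟨p, hpD, hpf⟩ := relBoundary_nonempty hD hDconn hJne hzF
            have hpJ : p ∈ J := relBoundary_subset_julia hD z ⟨hpD, hpf⟩
            have : p ∈ J ∩ (u' ∩ v') := ⟨hpJ, hzrb ⟨hpD, hpf⟩, hyrb ⟨hpD, hpf⟩⟩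
            rw [hdisj] at this
            exact this
        rcases hcl with hcl | hcl
        · obtain ⟨y, hyU, hyJv⟩ := mem_closure_iff.1 hcl U hUopen hzU
          have : y ∈ U ∩ ((J ∩ v') ∪
              {w | w ∈ F ∧ relBoundary D (connectedComponentIn F w) ⊆ v'}) := ⟨hyU, Or.inl hyJv⟩
          rw [hUdisj] at this
          exact this
        · obtain ⟨y, hyU, hyFv⟩ := mem_closure_iff.1 hcl U hUopen hzU
          have : y ∈ U ∩ ((J ∩ v') ∪
              {w | w ∈ F ∧ relBoundary D (connectedComponentIn F w) ⊆ v'}) := ⟨hyU, Or.inr hyFv⟩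
          rw [hUdisj] at this
          exact this
    -- the two star sets
    set Astar := (J ∩ u) ∪ {w | w ∈ F ∧ relBoundary D (connectedComponentIn F w) ⊆ u} with hA
    set Bstar := (J ∩ v) ∪ {w | w ∈ F ∧ relBoundary D (connectedComponentIn F w) ⊆ v} with hB
    have hdisj2 : J ∩ (v ∩ u) = ∅ := by
      rw [← hempty]
      ext y
      simp only [mem_inter_iff]
      tauto
    have hDcov : D ⊆ Astar ∪ Bstar := by
      intro z hz
      by_cases hzF : z ∈ F
      · have hpre := h z hzF
        have hsub : relBoundary D (connectedComponentIn F z) ⊆ u ∪ v :=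
          fun w hw => hcov (relBoundary_subset_julia hD z hw)
        by_cases hcase : relBoundary D (connectedComponentIn F z) ⊆ u
        · exact Or.inl (Or.inr ⟨hzF, hcase⟩)
        · refine Or.inr (Or.inr ⟨hzF, ?_⟩)
          intro w hw
          by_contra hwv
          have hwu : w ∈ u := by
            rcases hsub hw with h' | h'
            · exact h'
            · exact absurd h' hwv
          rw [Set.not_subset] at hcase
          obtain ⟨y, hyrb, hyu⟩ := hcase
          have hyv : y ∈ v := by
            rcases hsub hyrb with h' | h'
            · exact absurd h' hyu
            · exact h'
          obtain ⟨c, hcrb, hcu, hcv⟩ := hpre u v hu hv hsub ⟨w, hw, hwu⟩ ⟨y, hyrb, hyv⟩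
          have hcJ : c ∈ J := relBoundary_subset_julia hD z hcrb
          have : c ∈ J ∩ (u ∩ v) := ⟨hcJ, hcu, hcv⟩
          rw [hempty] at this
          exact this
      · have hzJ : z ∈ J := ⟨hz, hzF⟩
        rcases hcov hzJ with h' | h'
        · exact Or.inl (Or.inl ⟨hzJ, h'⟩)
        · exact Or.inr (Or.inl ⟨hzJ, h'⟩)
    -- contradiction with connectedness of D
    have hsep1 : ∀ z ∈ Astar, z ∉ closure Bstar := claim u v hu hv hempty
    have hsep2 : ∀ z ∈ Bstar, z ∉ closure Astar := claim v u hv hu hdisj2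
    obtain ⟨y, hyD, hyB, hyA⟩ := hDconn.isPreconnected (closure Bstar)ᶜ (closure Astar)ᶜ
      isClosed_closure.isOpen_compl isClosed_closure.isOpen_compl
      (fun z hz => by
        rcases hDcov hz with h' | h'
        · exact Or.inl (hsep1 z h')
        · exact Or.inr (hsep2 z h'))
      ⟨a, haJ.1, hsep1 a (Or.inl ⟨haJ, hau⟩)⟩
      ⟨b, hbJ.1, hsep2 b (Or.inl ⟨hbJ, hbv⟩)⟩
    rcases hDcov hyD with h' | h'
    · exact hyA (subset_closure h')
    · exact hyB (subset_closure h')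
end

section
/- Let 𝓕 be a family of holomorphic functions on a domain D ⊆ ℂ and let V be a connected component of the Fatou like set F(𝓕). If V ∩ I(𝓕) ≠ ∅, then V ⊆ I(𝓕). -/
open Filter Topology Set

/-- On a normality neighborhood `N`, if one point escapes then every point of `N` escapes. -/
lemma escaping_of_mem_nbhd (D : Set ℂ) (𝓕 : Set (ℂ → ℂ)) (N : Set ℂ)
    (hND : N ⊆ D)
    (hnorm : ∀ f : ℕ → ℂ → ℂ, (∀ n, f n ∈ 𝓕) →
      ∃ φ : ℕ → ℕ, StrictMono φ ∧
        ((∃ g : ℂ → ℂ, DifferentiableOn ℂ g N ∧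
            TendstoLocallyUniformlyOn (fun n => f (φ n)) g Filter.atTop N) ∨
          TendstoLocallyUniformlyOnInfty (fun n => f (φ n)) N))
    (w : ℂ) (hwN : w ∈ N) (hwI : w ∈ EscapingSet D 𝓕)
    (z : ℂ) (hzN : z ∈ N) : z ∈ EscapingSet D 𝓕 := by
  refine ⟨hND hzN, ?_⟩
  intro f hf hinj
  by_contra h
  rw [tendsto_atTop] at h
  push_neg at h
  obtain ⟨M, hM⟩ := h
  simp only [← not_le] at hM
  obtain ⟨σ, hσmono, hσ⟩ := Filter.extraction_of_frequently_atTop hM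
  obtain ⟨φ, hφ, hcase⟩ := hnorm (fun n => f (σ n)) (fun n => hf _)
  rcases hcase with ⟨g, _, hconv⟩ | hinf
  · have hptw := hconv.tendsto_at hwN
    have hnorm' : Tendsto (fun n => ‖f (σ (φ n)) w‖) atTop (𝓝 ‖g w‖) := hptw.norm
    have hinj2 : Function.Injective (fun n => f (σ (φ n))) :=
      hinj.comp (hσmono.comp hφ).injective
    have htop := hwI.2 (fun n => f (σ (φ n))) (fun n => hf _) hinj2
    exact not_tendsto_atTop_of_tendsto_nhds hnorm' htop
  · obtain ⟨n, hn⟩ := (hinf {z} (singleton_subset_iff.mpr hzN) isCompact_singleton M).exists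
    exact absurd (hn z (mem_singleton z)) (hσ (φ n))

/-- If a connected component `V` of the Fatou like set meets the
escaping like set `I(𝓕)`, then `V ⊆ I(𝓕)`. -/
theorem fatou_component_subset_escaping
    (D : Set ℂ) (hD : IsOpen D) (hDconn : IsConnected D)
    (𝓕 : Set (ℂ → ℂ)) (hol : ∀ f ∈ 𝓕, DifferentiableOn ℂ f D)
    (V : Set ℂ) (x : ℂ) (hx : x ∈ FatouSet D 𝓕)
    (hV : V = connectedComponentIn (FatouSet D 𝓕) x)
    (hne : (V ∩ EscapingSet D 𝓕).Nonempty) :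
    V ⊆ EscapingSet D 𝓕 := by
  set I := EscapingSet D 𝓕 with hI
  have hVsub : V ⊆ FatouSet D 𝓕 := hV ▸ connectedComponentIn_subset _ _
  have hVpre : IsPreconnected V := hV ▸ isPreconnected_connectedComponentIn
  have hcover : V ⊆ interior I ∪ interior Iᶜ := by
    intro z hz
    obtain ⟨-, N, hND, hNz, hnorm⟩ := hVsub hz
    by_cases hzI : z ∈ I
    · left
      rw [mem_interior_iff_mem_nhds]
      exact Filter.mem_of_superset hNz fun y hy =>
        escaping_of_mem_nbhd D 𝓕 N hND hnorm z (mem_of_mem_nhds hNz) hzI y hy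
    · right
      rw [mem_interior_iff_mem_nhds]
      refine Filter.mem_of_superset hNz fun y hy hyI => hzI ?_
      exact escaping_of_mem_nbhd D 𝓕 N hND hnorm y hy hyI z (mem_of_mem_nhds hNz)
  have hdisj : Disjoint (interior I) (interior Iᶜ) :=
    (disjoint_compl_right (a := I)).mono interior_subset interior_subset
  obtain ⟨w, hwV, hwI⟩ := hne
  have hwu : w ∈ interior I := by
    rcases hcover hwV with h | h
    · exact h
    · exact absurd hwI (interior_subset h)
  have := hVpre.subset_left_of_subset_union isOpen_interior isOpen_interior hdisj hcover
    ⟨w, hwV, hwu⟩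
  exact this.trans interior_subset
end

section
/- Let 𝓕 be a family of holomorphic functions on a domain D ⊆ ℂ. Then the boundary of the escaping like set I(𝓕) relative to D is contained in the Julia like set: ∂I(𝓕) ⊆ J(𝓕). -/
open Filter Topology Set

/-- The boundary of the escaping like set `I(𝓕)` relative to `D` is
contained in the Julia like set `J(𝓕)`. -/
theorem relBoundary_escaping_subset_julia
    (D : Set ℂ) (hD : IsOpen D) (hDconn : IsConnected D)
    (𝓕 : Set (ℂ → ℂ)) (hol : ∀ f ∈ 𝓕, DifferentiableOn ℂ f D) :
    relBoundary D (EscapingSet D 𝓕) ⊆ JuliaSet D 𝓕 := by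
  rintro z ⟨hzD, hzfr⟩
  refine ⟨hzD, fun hzF => ?_⟩
  obtain ⟨N, hND, hNz, hnorm⟩ := hzF.2
  -- z is in the closure of the escaping set and of its complement
  have hclI : z ∈ closure (EscapingSet D 𝓕) := hzfr.1
  have hclC : z ∈ closure (EscapingSet D 𝓕)ᶜ := by
    have := hzfr.2
    rwa [closure_compl, mem_compl_iff]
  obtain ⟨a, haN, haI⟩ := mem_closure_iff_nhds.1 hclI N hNz
  obtain ⟨b, hbN, hbC⟩ := mem_closure_iff_nhds.1 hclC N hNz
  have hbD : b ∈ D := hND hbN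
  -- b not escaping: get an injective sequence g in 𝓕 not tending to ∞ at b
  have : ∃ g : ℕ → ℂ → ℂ, (∀ n, g n ∈ 𝓕) ∧ Function.Injective g ∧
      ¬ Filter.Tendsto (fun n => ‖g n b‖) Filter.atTop Filter.atTop := by
    by_contra h
    push_neg at h
    exact hbC ⟨hbD, fun g hg hinj => h g hg hinj⟩
  obtain ⟨g, hg𝓕, hginj, hgnt⟩ := this
  -- extract a subsequence of g bounded at b
  rw [tendsto_atTop] at hgnt
  push_neg at hgnt
  obtain ⟨M, hM⟩ := hgnt
  simp_rw [← not_le] at hM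
  obtain ⟨ψ, hψ, hψM⟩ := Filter.extraction_of_frequently_atTop hM
  -- apply normality to g ∘ ψ
  obtain ⟨φ, hφ, hcase⟩ := hnorm (fun n => g (ψ n)) (fun n => hg𝓕 _)
  rcases hcase with ⟨G, hGd, hGt⟩ | hinf
  · -- convergence to holomorphic G contradicts escape at a
    have hinj2 : Function.Injective (fun n => g (ψ (φ n))) :=
      hginj.comp (hψ.comp hφ).injective
    have hesc := haI.2 (fun n => g (ψ (φ n))) (fun n => hg𝓕 _) hinj2
    have hta : Filter.Tendsto (fun n => g (ψ (φ n)) a) Filter.atTop (𝓝 (G a)) :=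
      hGt.tendsto_at haN
    have : Filter.Tendsto (fun n => ‖g (ψ (φ n)) a‖) Filter.atTop (𝓝 ‖G a‖) :=
      hta.norm
    exact not_tendsto_atTop_of_tendsto_nhds this hesc
  · -- divergence to ∞ contradicts boundedness at b
    have hKb : ({b} : Set ℂ) ⊆ N := singleton_subset_iff.2 hbN
    have := hinf {b} hKb isCompact_singleton M
    obtain ⟨n, hn⟩ := this.exists
    exact absurd (hn b rfl) (hψM (φ n))
end

section
/- Let 𝓕 be a family of entire functions (with D = ℂ) such that f ∘ g = g ∘ f for all f, g ∈ 𝓕. Then the escaping like set I(𝓕) and the generalized escaping like set U(𝓕) are backward invariant: for every g ∈ 𝓕, g⁻¹(I(𝓕)) ⊆ I(𝓕) and g⁻¹(U(𝓕)) ⊆ U(𝓕). -/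
open Filter Topology Set

/-- If `𝓕` is a family of entire functions with `f ∘ g = g ∘ f` for all
`f, g ∈ 𝓕`, then `I(𝓕)` and `U(𝓕)` are backward invariant. -/
theorem escaping_genEscaping_backward_invariant_of_commuting (𝓕 : Set (ℂ → ℂ))
    (hent : ∀ f ∈ 𝓕, Differentiable ℂ f)
    (hcomm : ∀ f ∈ 𝓕, ∀ g ∈ 𝓕, f ∘ g = g ∘ f) :
    ∀ g ∈ 𝓕, g ⁻¹' EscapingSet Set.univ 𝓕 ⊆ EscapingSet Set.univ 𝓕 ∧
      g ⁻¹' GenEscapingSet Set.univ 𝓕 ⊆ GenEscapingSet Set.univ 𝓕 := by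
  intro g hg
  -- key lemma: if ‖g (w n)‖ → ∞ then ‖w n‖ → ∞
  have key : ∀ w : ℕ → ℂ,
      Tendsto (fun n => ‖g (w n)‖) atTop atTop → Tendsto (fun n => ‖w n‖) atTop atTop := by
    intro w hw
    by_contra h
    rw [tendsto_atTop] at h
    push_neg at h
    obtain ⟨b, hb⟩ := h
    obtain ⟨C, hC⟩ := (isCompact_closedBall (0:ℂ) b).exists_bound_of_continuousOn
      ((hent g hg).continuous.continuousOn)
    have hfreq : ∃ᶠ n in atTop, ‖w n‖ < b := by
      rw [Filter.frequently_atTop]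
      intro a
      obtain ⟨n, hn1, hn2⟩ := Filter.frequently_atTop.mp ((Filter.not_eventually.mp hb)) a
      exact ⟨n, hn1, not_not.mp hn2⟩
    obtain ⟨n, hn1, hn2⟩ := (hfreq.and_eventually (hw.eventually_ge_atTop (C+1))).exists
    have := hC (w n) (by simpa [Metric.mem_closedBall, Complex.dist_eq] using hn1.le)
    linarith
  constructor
  · intro z hz
    obtain ⟨-, hz2⟩ := hz
    refine ⟨trivial, fun f hf hinj => ?_⟩
    have h1 := hz2 f hf hinj
    apply key
    have : ∀ n, f n (g z) = g (f n z) := fun n =>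
      congrFun (hcomm (f n) (hf n) g hg) z
    simpa [this] using h1
  · intro z hz
    obtain ⟨-, f, hf, htend⟩ := hz
    refine ⟨trivial, f, hf, ?_⟩
    apply key
    have : ∀ n, f n (g z) = g (f n z) := fun n =>
      congrFun (hcomm (f n) (hf n) g hg) z
    simpa [this] using htend
end
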